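/- arXiv:1908.01203 — 6 statements merged into one kernel-verified Lean document; each statement's English description precedes it below -/
import Mathlib

section
/- Let ρ = (1/(d_S d_E)) I_{SE} and σ = |1_S⟩⟨1_S| ⊗ |1_E⟩⟨1_E| be density operators on H_S ⊗ H_E, and let Λ_S be the linear map on the span of {I_S/d_S, |1_S⟩⟨1_S|} defined by Λ_S(I_S/d_S) = ρ and Λ_S(|1_S⟩⟨1_S|) = σ. Then Λ_S is not a positive map: for a ≥ 0 and −a/d_S ≤ b < −a/(d_S d_E) with (a,b) ≠ (0,0), the operator x = a·(I_S/d_S) + b·|1_S⟩⟨1_S| is positive semidefinite but Λ_S(x) = aρ + bσ is not positive semidefinite. -/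
open scoped Kronecker ComplexOrder Matrix

/-- Logarithm of a Hermitian matrix via its spectral decomposition
(zero eigenvalues contribute `log 0 = 0`). -/
noncomputable def matLog {n : Type*} [Fintype n] [DecidableEq n] (M : Matrix n n ℂ) :
    Matrix n n ℂ :=
  if h : M.IsHermitian then
    (h.eigenvectorUnitary : Matrix n n ℂ) *
      Matrix.diagonal (fun i => (Real.log (h.eigenvalues i) : ℂ)) *
      star (h.eigenvectorUnitary : Matrix n n ℂ)
  else 0

/-- von Neumann entropy `S(ρ) = -Tr(ρ log ρ)`. -/
noncomputable def vnEntropy {n : Type*} [Fintype n] [DecidableEq n] (M : Matrix n n ℂ) : ℝ :=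
  -(M * matLog M).trace.re

/-- Quantum relative entropy `S(ρ‖σ) = Tr(ρ log ρ) - Tr(ρ log σ)`. -/
noncomputable def relEntropy {n : Type*} [Fintype n] [DecidableEq n]
    (ρ σ : Matrix n n ℂ) : ℝ :=
  ((ρ * matLog ρ).trace - (ρ * matLog σ).trace).re

/-- A density operator: positive semidefinite with unit trace. -/
def IsDensity {n : Type*} [Fintype n] (M : Matrix n n ℂ) : Prop :=
  M.PosSemidef ∧ M.trace = 1

/-- Partial trace over the left tensor factor. -/
noncomputable def ptraceLeft {a b : Type*} [Fintype a] (M : Matrix (a × b) (a × b) ℂ) :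
    Matrix b b ℂ :=
  Matrix.of fun i j => ∑ k, M (k, i) (k, j)

/-- Partial trace over the right tensor factor. -/
noncomputable def ptraceRight {a b : Type*} [Fintype b] (M : Matrix (a × b) (a × b) ℂ) :
    Matrix a a ℂ :=
  Matrix.of fun i j => ∑ k, M (i, k) (j, k)

/-- Mutual information `I(A:B) = S(ρ_A) + S(ρ_B) - S(ρ_AB)`. -/
noncomputable def mutInfo {a b : Type*} [Fintype a] [Fintype b] [DecidableEq a] [DecidableEq b]
    (M : Matrix (a × b) (a × b) ℂ) : ℝ :=
  vnEntropy (ptraceRight M) + vnEntropy (ptraceLeft M) - vnEntropy M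

/-- The extension `id_r ⊗ Φ` of a map `Φ` on matrices, acting blockwise. -/
noncomputable def idTen {r s t : Type*} [Fintype s]
    (Φ : Matrix s s ℂ → Matrix t t ℂ) (M : Matrix (r × s) (r × s) ℂ) :
    Matrix (r × t) (r × t) ℂ :=
  Matrix.of fun x y => Φ (Matrix.of fun a b => M (x.1, a) (y.1, b)) x.2 y.2

lemma vecMulVec_mulVec' {n : Type*} [Fintype n] (v w y : n → ℂ) :
    Matrix.vecMulVec v w *ᵥ y = (w ⬝ᵥ y) • v := by
  ext i
  simp [Matrix.mulVec, dotProduct, Matrix.vecMulVec_apply, Finset.mul_sum,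
    Finset.sum_mul, mul_comm, mul_assoc, mul_left_comm]

lemma dot_star_self {n : Type*} [Fintype n] (y : n → ℂ) :
    star y ⬝ᵥ y = ((∑ i, Complex.normSq (y i) : ℝ) : ℂ) := by
  simp [dotProduct, Complex.normSq_eq_conj_mul_self]

lemma dot_star_comm {n : Type*} [Fintype n] (v y : n → ℂ) :
    star y ⬝ᵥ v = (starRingEnd ℂ) (star v ⬝ᵥ y) := by
  simp [dotProduct, map_sum, mul_comm]

lemma cs_lemma {n : Type*} [Fintype n] (v y : n → ℂ) (hv : star v ⬝ᵥ v = 1) :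
    Complex.normSq (star v ⬝ᵥ y) ≤ ∑ i, Complex.normSq (y i) := by
  let v' : EuclideanSpace ℂ n := WithLp.toLp 2 v
  let y' : EuclideanSpace ℂ n := WithLp.toLp 2 y
  have hinner : (inner ℂ v' y' : ℂ) = star v ⬝ᵥ y := by
    simp only [PiLp.inner_apply, dotProduct, RCLike.inner_apply, PiLp.toLp_apply, v', y', Pi.star_apply]
    exact Finset.sum_congr rfl fun i _ => mul_comm _ _
  have h1 : ‖(inner ℂ v' y' : ℂ)‖ ≤ ‖v'‖ * ‖y'‖ := norm_inner_le_norm v' y'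
  have hvnorm : ‖v'‖ ^ 2 = 1 := by
    have := inner_self_eq_norm_sq (𝕜 := ℂ) v'
    rw [← this]
    have : (inner ℂ v' v' : ℂ) = star v ⬝ᵥ v := by
      simp only [PiLp.inner_apply, dotProduct, RCLike.inner_apply, PiLp.toLp_apply, v', Pi.star_apply]
      exact Finset.sum_congr rfl fun i _ => mul_comm _ _
    rw [this, hv]; simp
  have hynorm : ‖y'‖ ^ 2 = ∑ i, Complex.normSq (y i) := by
    have := inner_self_eq_norm_sq (𝕜 := ℂ) y'
    rw [← this]
    simp only [PiLp.inner_apply, RCLike.inner_apply, PiLp.toLp_apply, y']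
    rw [map_sum]
    congr 1; ext i
    simp [Complex.normSq_apply, Complex.mul_re]
  have h2 : ‖(inner ℂ v' y' : ℂ)‖ ^ 2 ≤ ‖v'‖ ^ 2 * ‖y'‖ ^ 2 := by
    rw [← mul_pow]
    exact pow_le_pow_left₀ (norm_nonneg _) h1 2
  rw [hvnorm, hynorm, one_mul, hinner] at h2
  rwa [Complex.normSq_eq_norm_sq]

/-- the assignment map determined by `Λ(I_S/d_S) = ρ`, `Λ(|1⟩⟨1|) = σ`
is not positive: `x = a (I_S/d_S) + b |1⟩⟨1|` is PSD while `Λ(x) = aρ + bσ` is not. -/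
theorem assignment_map_not_positive
    (dS dE : ℕ) (hdS : 2 ≤ dS) (hdE : 2 ≤ dE)
    (v : Fin dS → ℂ) (u : Fin dE → ℂ)
    (hv : star v ⬝ᵥ v = 1) (hu : star u ⬝ᵥ u = 1)
    (a b : ℝ) (ha : 0 ≤ a) (hb1 : -(a / dS) ≤ b) (hb2 : b < -(a / (dS * dE)))
    (hab : (a, b) ≠ (0, 0)) :
    ((a : ℂ) • ((dS : ℂ)⁻¹ • (1 : Matrix (Fin dS) (Fin dS) ℂ)) +
        (b : ℂ) • Matrix.vecMulVec v (star v)).PosSemidef ∧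
    ¬ ((a : ℂ) • (((dS : ℂ) * (dE : ℂ))⁻¹ •
          (1 : Matrix (Fin dS × Fin dE) (Fin dS × Fin dE) ℂ)) +
        (b : ℂ) • (Matrix.vecMulVec v (star v) ⊗ₖ Matrix.vecMulVec u (star u))).PosSemidef := by
  
  have hdS0 : (0:ℝ) < dS := by positivity
  have hdE0 : (0:ℝ) < dE := by positivity
  have hb0 : b ≤ 0 := by
    have : 0 ≤ a / (dS * dE) := by positivity
    linarith
  constructor
  · refine Matrix.PosSemidef.of_dotProduct_mulVec_nonneg ?_ ?_
    · show _ᴴ = _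
      ext i j
      simp [Matrix.conjTranspose_apply, Matrix.add_apply, Matrix.smul_apply,
        Matrix.one_apply, Matrix.vecMulVec_apply, mul_comm, apply_ite (starRingEnd ℂ),
        eq_comm]
    · intro y
      set t := ∑ i, Complex.normSq (y i) with ht
      set s := star v ⬝ᵥ y with hs
      have key : star y ⬝ᵥ (((a : ℂ) • ((dS : ℂ)⁻¹ • (1 : Matrix (Fin dS) (Fin dS) ℂ)) +
          (b : ℂ) • Matrix.vecMulVec v (star v)) *ᵥ y)
          = ((a / dS * t + b * Complex.normSq s : ℝ) : ℂ) := by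
        rw [Matrix.add_mulVec, Matrix.smul_mulVec, Matrix.smul_mulVec,
          Matrix.smul_mulVec, Matrix.one_mulVec, vecMulVec_mulVec']
        rw [dotProduct_add]
        simp only [dotProduct_smul, smul_eq_mul]
        rw [dot_star_self, dot_star_comm v y, ← hs, ← ht, Complex.mul_conj]
        push_cast
        ring
      rw [key]
      rw [Complex.zero_le_real]
      have hcs : Complex.normSq s ≤ t := cs_lemma v y hv
      have ht0 : 0 ≤ t := Finset.sum_nonneg fun i _ => Complex.normSq_nonneg _
      have hns : 0 ≤ Complex.normSq s := Complex.normSq_nonneg _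
      have hb1' : -b ≤ a / dS := by linarith
      nlinarith [mul_nonneg (neg_nonneg.mpr hb0) (sub_nonneg.mpr hcs),
        mul_nonneg (by linarith : (0:ℝ) ≤ a / dS + b) ht0]
  · intro hpsd
    set w : Fin dS × Fin dE → ℂ := fun p => v p.1 * u p.2 with hwdef
    have hk : Matrix.vecMulVec v (star v) ⊗ₖ Matrix.vecMulVec u (star u)
        = Matrix.vecMulVec w (star w) := by
      ext ⟨i, j⟩ ⟨k, l⟩
      simp [Matrix.kroneckerMap_apply, Matrix.vecMulVec_apply, hwdef, star_mul']
      ring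
    have hw : star w ⬝ᵥ w = 1 := by
      have : star w ⬝ᵥ w = (star v ⬝ᵥ v) * (star u ⬝ᵥ u) := by
        simp only [dotProduct, Pi.star_apply, Fintype.sum_prod_type, hwdef,
          Finset.sum_mul_sum]
        congr 1; ext i; congr 1; ext j
        simp [star_mul']
        ring
      rw [this, hv, hu, one_mul]
    have hform := hpsd.dotProduct_mulVec_nonneg w
    have key : star w ⬝ᵥ (((a : ℂ) • (((dS : ℂ) * (dE : ℂ))⁻¹ •
          (1 : Matrix (Fin dS × Fin dE) (Fin dS × Fin dE) ℂ)) +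
        (b : ℂ) • (Matrix.vecMulVec v (star v) ⊗ₖ Matrix.vecMulVec u (star u))) *ᵥ w)
        = ((a / (dS * dE) + b : ℝ) : ℂ) := by
      rw [hk, Matrix.add_mulVec, Matrix.smul_mulVec, Matrix.smul_mulVec,
        Matrix.smul_mulVec, Matrix.one_mulVec, vecMulVec_mulVec', hw, one_smul]
      rw [dotProduct_add]
      simp only [dotProduct_smul, smul_eq_mul]
      rw [hw]
      push_cast
      ring
    rw [key, Complex.zero_le_real] at hform
    linarith
end

section
/- A linear map Φ on operators of a finite-dimensional Hilbert space is completely positive if and only if its Choi matrix (id ⊗ Φ)(|ξ⟩⟨ξ|), where |ξ⟩ = Σ_i |i⟩|i⟩, is positive semidefinite. -/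
open scoped Kronecker ComplexOrder Matrix

private lemma choi_psd_sum {n ι : Type*} [Fintype n] (s : Finset ι) (f : ι → Matrix n n ℂ)
    (h : ∀ i ∈ s, (f i).PosSemidef) : (∑ i ∈ s, f i).PosSemidef := by
  refine Finset.sum_induction f _ ?_ Matrix.PosSemidef.zero h
  intro a b ha hb
  refine ⟨ha.1.add hb.1, fun x => ?_⟩
  simpa [mul_add, add_mul] using add_nonneg (ha.2 x) (hb.2 x)

private lemma choi_kraus_entry (d m : ℕ) (c : (Fin d × Fin d) → ℂ)
    (M : Matrix (Fin m × Fin d) (Fin m × Fin d) ℂ)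
    (x y : Fin m × Fin d) :
    ((Matrix.of fun (u : Fin m × Fin d) (p : Fin m × Fin d) =>
          if u.1 = p.1 then star (c (p.2, u.2)) else 0) * M *
        (Matrix.of fun (u : Fin m × Fin d) (p : Fin m × Fin d) =>
          if u.1 = p.1 then star (c (p.2, u.2)) else 0)ᴴ) x y
      = ∑ i, ∑ j, star (c (i, x.2)) * M (x.1,i) (y.1,j) * c (j, y.2) := by
  simp only [Matrix.mul_apply, Matrix.conjTranspose_apply, Matrix.of_apply, Finset.sum_mul,
    ite_mul, zero_mul, apply_ite (star : ℂ → ℂ), star_zero, mul_ite, mul_zero, star_star,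
    Fintype.sum_prod_type]
  rw [Finset.sum_comm]
  simp only [Finset.sum_ite_eq, Finset.sum_ite_eq', Finset.mem_univ, if_true]
  trans (∑ x1 : Fin d, ∑ x3 : Fin d, star (c (x3, x.2)) * M (x.1, x3) (y.1, x1) * c (x1, y.2))
  · refine Finset.sum_congr rfl fun x1 _ => ?_
    rw [Finset.sum_comm]
    simp only [Finset.sum_ite_eq, Finset.sum_ite_eq', Finset.mem_univ, if_true]
  · exact Finset.sum_comm

/-- Choi's theorem: a linear map is completely positive iff its Choi
matrix `(id ⊗ Φ)(|ξ⟩⟨ξ|)` is positive semidefinite. -/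
theorem completely_positive_iff_choi_posSemidef
    (d : ℕ) (Φ : Matrix (Fin d) (Fin d) ℂ →ₗ[ℂ] Matrix (Fin d) (Fin d) ℂ) :
    (∀ (m : ℕ) (M : Matrix (Fin m × Fin d) (Fin m × Fin d) ℂ),
        M.PosSemidef → (idTen (r := Fin m) ⇑Φ M).PosSemidef) ↔
      (idTen (r := Fin d) ⇑Φ
        (Matrix.of fun (x y : Fin d × Fin d) =>
          if x.1 = x.2 ∧ y.1 = y.2 then (1 : ℂ) else 0)).PosSemidef := by
  constructor
  · intro h
    refine h d _ ?_
    set B : Matrix (Fin 1) (Fin d × Fin d) ℂ :=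
      Matrix.of fun _ x => if x.1 = x.2 then (1:ℂ) else 0 with hBdef
    have h : (Matrix.of fun (x y : Fin d × Fin d) =>
            if x.1 = x.2 ∧ y.1 = y.2 then (1 : ℂ) else 0) = Bᴴ * B := by
      ext x y
      simp [hBdef, Matrix.mul_apply, Matrix.conjTranspose_apply]
      split_ifs <;> simp_all
    rw [h]
    exact Matrix.posSemidef_conjTranspose_mul_self _
  · intro hC m M hM
    have key : ∀ (A : Matrix (Fin d) (Fin d) ℂ) (a b : Fin d),
        Φ A a b = ∑ i, ∑ j, A i j *
          (idTen (r := Fin d) ⇑Φ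
            (Matrix.of fun (x y : Fin d × Fin d) =>
              if x.1 = x.2 ∧ y.1 = y.2 then (1 : ℂ) else 0)) (i,a) (j,b) := by
      intro A a b
      have h1 : ∀ i j : Fin d,
          (idTen (r := Fin d) ⇑Φ
            (Matrix.of fun (x y : Fin d × Fin d) =>
              if x.1 = x.2 ∧ y.1 = y.2 then (1 : ℂ) else 0)) (i,a) (j,b)
          = Φ (Matrix.single i j 1) a b := by
        intro i j
        simp only [idTen, Matrix.of_apply]
        congr 2
      simp_rw [h1]
      conv_lhs => rw [Matrix.matrix_eq_sum_single A]
      rw [map_sum]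
      simp only [Matrix.sum_apply]
      congr 1; ext i
      rw [map_sum]
      simp only [Matrix.sum_apply]
      congr 1; ext j
      have : Matrix.single i j (A i j) = A i j • Matrix.single i j 1 := by
        simp
      rw [this, map_smul]
      simp
    obtain ⟨B, hB⟩ : ∃ B : Matrix (Fin d × Fin d) (Fin d × Fin d) ℂ, _ = Bᴴ * B := by
      open scoped MatrixOrder Matrix.Norms.L2Operator in
      exact CStarAlgebra.nonneg_iff_eq_star_mul_self.mp hC.nonneg
    have hN : idTen (r := Fin m) ⇑Φ M = ∑ k : Fin d × Fin d,
        (Matrix.of fun (u : Fin m × Fin d) (p : Fin m × Fin d) =>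
          if u.1 = p.1 then star (B k (p.2, u.2)) else 0) * M *
        (Matrix.of fun (u : Fin m × Fin d) (p : Fin m × Fin d) =>
          if u.1 = p.1 then star (B k (p.2, u.2)) else 0)ᴴ := by
      ext x y
      rw [Matrix.sum_apply]
      simp_rw [choi_kraus_entry d m]
      have hL : idTen (r := Fin m) (⇑Φ) M x y
          = ∑ i, ∑ j, M (x.1,i) (y.1,j) *
            (idTen (r := Fin d) ⇑Φ
              (Matrix.of fun (x y : Fin d × Fin d) =>
                if x.1 = x.2 ∧ y.1 = y.2 then (1 : ℂ) else 0)) (i,x.2) (j,y.2) := by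
        exact key (Matrix.of fun a b => M (x.1, a) (y.1, b)) x.2 y.2
      rw [hL, hB]
      simp_rw [Matrix.mul_apply, Matrix.conjTranspose_apply, Finset.mul_sum]
      calc (∑ i, ∑ j, ∑ k : Fin d × Fin d,
              M (x.1,i) (y.1,j) * (star (B k (i,x.2)) * B k (j,y.2)))
          = ∑ i, ∑ k : Fin d × Fin d, ∑ j,
              M (x.1,i) (y.1,j) * (star (B k (i,x.2)) * B k (j,y.2)) :=
            Finset.sum_congr rfl fun i _ => Finset.sum_comm
        _ = ∑ k : Fin d × Fin d, ∑ i, ∑ j,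
              M (x.1,i) (y.1,j) * (star (B k (i,x.2)) * B k (j,y.2)) := Finset.sum_comm
        _ = ∑ k : Fin d × Fin d, ∑ i, ∑ j,
              star (B k (i, x.2)) * M (x.1,i) (y.1,j) * B k (j, y.2) := by
            refine Finset.sum_congr rfl fun k _ => Finset.sum_congr rfl fun i _ =>
              Finset.sum_congr rfl fun j _ => by ring
    rw [hN]
    exact choi_psd_sum _ _ fun k _ => hM.mul_mul_conjTranspose_same _
end

section
/- If ω_{RSE} = ⊕_k λ_k ω_{Rs^l_k} ⊗ ω_{s^r_k E} is a Markov state (a direct sum over a decomposition H_S = ⊕_k H_{s^l_k} ⊗ H_{s^r_k}, with λ_k a probability distribution and ω_{Rs^l_k}, ω_{s^r_k E} density operators), then S(ω_{RS}) + S(ω_{SE}) − S(ω_{RSE}) − S(ω_S) = 0, i.e., the strong subadditivity inequality is saturated. -/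
open scoped Kronecker ComplexOrder Matrix

open Polynomial Matrix Finset


/-- x log x -/
noncomputable def fent (x : ℝ) : ℝ := x * Real.log x

lemma fent_mul (x y : ℝ) : fent (x * y) = x * fent y + y * fent x := by
  rcases eq_or_ne x 0 with hx | hx
  · simp [fent, hx]
  rcases eq_or_ne y 0 with hy | hy
  · simp [fent, hy]
  simp [fent, Real.log_mul hx hy]
  ring

lemma fent_zero : fent 0 = 0 := by simp [fent]

section trace

variable {n : Type*} [Fintype n] [DecidableEq n]

lemma trace_mul_matLog {M : Matrix n n ℂ} (hM : M.IsHermitian) :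
    (M * matLog M).trace = ∑ i, (fent (hM.eigenvalues i) : ℂ) := by
  have hlog : matLog M = (hM.eigenvectorUnitary : Matrix n n ℂ) *
      Matrix.diagonal (fun i => (Real.log (hM.eigenvalues i) : ℂ)) *
      star (hM.eigenvectorUnitary : Matrix n n ℂ) := by
    rw [matLog, dif_pos hM]
  set U := (hM.eigenvectorUnitary : Matrix n n ℂ) with hUdef
  have hdiag : star U * M * U = Matrix.diagonal (RCLike.ofReal ∘ hM.eigenvalues) :=
    by have := hM.conjStarAlgAut_star_eigenvectorUnitary
       rwa [Unitary.conjStarAlgAut_star_apply] at this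
  rw [hlog]
  rw [show M * (U * Matrix.diagonal (fun i => (Real.log (hM.eigenvalues i) : ℂ)) * star U)
      = (M * U * Matrix.diagonal (fun i => (Real.log (hM.eigenvalues i) : ℂ))) * star U by
        noncomm_ring]
  rw [Matrix.trace_mul_comm, ← Matrix.mul_assoc, ← Matrix.mul_assoc, hdiag,
    Matrix.diagonal_mul_diagonal, Matrix.trace_diagonal]
  simp [fent]

end trace

section charpoly

variable {n : Type*} [Fintype n] [DecidableEq n]

lemma charpoly_diagonal' (c : n → ℂ) :
    (Matrix.diagonal c).charpoly = ∏ i, (X - C (c i)) := by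
  have h : charmatrix (Matrix.diagonal c) = Matrix.diagonal (fun i => (X : ℂ[X]) - C (c i)) := by
    ext i j
    by_cases h : i = j
    · subst h; simp
    · simp [Matrix.diagonal_apply_ne _ h, charmatrix_apply_ne _ _ _ h]
  rw [Matrix.charpoly, h, Matrix.det_diagonal]

lemma charpoly_unitary_conj {W N : Matrix n n ℂ} (hW : W ∈ Matrix.unitaryGroup n ℂ) :
    (W * N * star W).charpoly = N.charpoly := by
  have hWW : (C : ℂ →+* ℂ[X]).mapMatrix W * (C : ℂ →+* ℂ[X]).mapMatrix (star W) = 1 := by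
    rw [← _root_.map_mul, Matrix.mem_unitaryGroup_iff.mp hW, _root_.map_one]
  have hWW' : (C : ℂ →+* ℂ[X]).mapMatrix (star W) * (C : ℂ →+* ℂ[X]).mapMatrix W = 1 := by
    rw [← _root_.map_mul, Matrix.mem_unitaryGroup_iff'.mp hW, _root_.map_one]
  have hmc : charmatrix (W * N * star W)
      = ((C : ℂ →+* ℂ[X]).mapMatrix W) * charmatrix N * ((C : ℂ →+* ℂ[X]).mapMatrix (star W)) := by
    rw [charmatrix, charmatrix, Matrix.mul_sub, Matrix.sub_mul]
    congr 1
    · rw [Matrix.mul_assoc, (Matrix.scalar_commute (X : ℂ[X]) (fun r => (Commute.all _ r))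
        ((C : ℂ →+* ℂ[X]).mapMatrix (star W))).eq, ← Matrix.mul_assoc, hWW, Matrix.one_mul]
    · rw [_root_.map_mul, _root_.map_mul]
  rw [Matrix.charpoly, Matrix.charpoly, hmc, Matrix.det_mul, Matrix.det_mul]
  rw [mul_comm, ← mul_assoc, ← Matrix.det_mul, hWW', Matrix.det_one, one_mul]

lemma eigenvalues_multiset_eq {M : Matrix n n ℂ} (W : Matrix n n ℂ)
    (hW : W ∈ Matrix.unitaryGroup n ℂ) (d : n → ℝ)
    (hM : M = W * Matrix.diagonal (fun i => (d i : ℂ)) * star W) (hherm : M.IsHermitian) :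
    (Finset.univ.val.map hherm.eigenvalues) = Finset.univ.val.map d := by
  have h1 : M.charpoly = ∏ i, (X - C ((d i : ℂ))) := by
    rw [hM, charpoly_unitary_conj hW, charpoly_diagonal']
  have h2 : M.charpoly = ∏ i, (X - C ((hherm.eigenvalues i : ℂ))) := by
    conv_lhs => rw [hherm.spectral_theorem, Unitary.conjStarAlgAut_apply]
    rw [charpoly_unitary_conj (hherm.eigenvectorUnitary).2, charpoly_diagonal']
    rfl
  have key : (Finset.univ.val.map (fun i => ((hherm.eigenvalues i : ℂ))))
      = Finset.univ.val.map (fun i => ((d i : ℂ))) := by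
    have r1 : ((Finset.univ.val.map (fun i => ((hherm.eigenvalues i : ℂ)))).map
        (fun a => X - C a)).prod = ((Finset.univ.val.map (fun i => ((d i : ℂ)))).map
        (fun a => X - C a)).prod := by
      rw [Multiset.map_map, Multiset.map_map]
      calc ((Finset.univ.val.map ((fun a => X - C a) ∘ fun i => ((hherm.eigenvalues i : ℂ))))).prod
          = ∏ i, (X - C ((hherm.eigenvalues i : ℂ))) := rfl
        _ = ∏ i, (X - C ((d i : ℂ))) := by rw [← h2, h1]
        _ = _ := rfl
    have := congrArg Polynomial.roots r1
    rwa [Polynomial.roots_multiset_prod_X_sub_C, Polynomial.roots_multiset_prod_X_sub_C] at this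
  have : Multiset.map (fun x : ℝ => (x : ℂ)) (Finset.univ.val.map hherm.eigenvalues)
      = Multiset.map (fun x : ℝ => (x : ℂ)) (Finset.univ.val.map d) := by
    rw [Multiset.map_map, Multiset.map_map]; exact key
  exact Multiset.map_injective Complex.ofReal_injective this

lemma vnEntropy_unitary_conj {M : Matrix n n ℂ} (W : Matrix n n ℂ)
    (hW : W ∈ Matrix.unitaryGroup n ℂ) (d : n → ℝ)
    (hM : M = W * Matrix.diagonal (fun i => (d i : ℂ)) * star W) :
    vnEntropy M = -∑ i, fent (d i) := by
  have hherm : M.IsHermitian := by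
    rw [hM, Matrix.IsHermitian]
    rw [Matrix.conjTranspose_mul, Matrix.conjTranspose_mul]
    rw [Matrix.diagonal_conjTranspose]
    simp only [star_star, Matrix.star_eq_conjTranspose]
    rw [show star (fun i => ((d i : ℂ))) = fun i => ((d i : ℂ)) by
      funext i; simp [Pi.star_apply, Complex.star_def, Complex.conj_ofReal]]
    simp only [Matrix.conjTranspose_conjTranspose, Matrix.star_eq_conjTranspose]
    noncomm_ring
  have hms := eigenvalues_multiset_eq W hW d hM hherm
  have : ∑ i, fent (hherm.eigenvalues i) = ∑ i, fent (d i) := by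
    have e1 : ∑ i, fent (hherm.eigenvalues i)
        = ((Finset.univ.val.map hherm.eigenvalues).map fent).sum := by
      rw [Multiset.map_map]; rfl
    have e2 : ∑ i, fent (d i) = ((Finset.univ.val.map d).map fent).sum := by
      rw [Multiset.map_map]; rfl
    rw [e1, e2, hms]
  rw [vnEntropy, trace_mul_matLog hherm]
  rw [show (∑ i, ((fent (hherm.eigenvalues i) : ℂ))) = ((∑ i, fent (hherm.eigenvalues i) : ℝ) : ℂ)
    by push_cast; ring]
  rw [Complex.ofReal_re, this]

end charpoly

set_option linter.unusedSectionVars false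
section core

open Polynomial Matrix Finset

variable {κ : Type*} [Fintype κ] [DecidableEq κ]
variable {m n : κ → Type*} [∀ k, Fintype (m k)] [∀ k, DecidableEq (m k)]
  [∀ k, Fintype (n k)] [∀ k, DecidableEq (n k)]
variable {ι : Type*} [Fintype ι] [DecidableEq ι]

/-- block diagonal tensor-product matrix on a sigma type -/
noncomputable def sigBlock (P : ∀ k, Matrix (m k) (m k) ℂ) (Q : ∀ k, Matrix (n k) (n k) ℂ)
    (p q : Σ k : κ, m k × n k) : ℂ :=
  if h : q.1 = p.1 then P p.1 p.2.1 ((h ▸ q.2).1) * Q p.1 p.2.2 ((h ▸ q.2).2) else 0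

lemma sigBlock_same (P : ∀ k, Matrix (m k) (m k) ℂ) (Q : ∀ k, Matrix (n k) (n k) ℂ)
    (k : κ) (i i' : m k) (j j' : n k) :
    sigBlock P Q ⟨k, (i, j)⟩ ⟨k, (i', j')⟩ = P k i i' * Q k j j' := by
  rw [sigBlock, dif_pos rfl]

lemma sigBlock_off (P : ∀ k, Matrix (m k) (m k) ℂ) (Q : ∀ k, Matrix (n k) (n k) ℂ)
    {p q : Σ k : κ, m k × n k} (h : q.1 ≠ p.1) :
    sigBlock P Q p q = 0 := dif_neg h

lemma sigBlock_sum_off (P : ∀ k, Matrix (m k) (m k) ℂ) (Q : ∀ k, Matrix (n k) (n k) ℂ)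
    (wf : (Σ k : κ, m k × n k) → ℂ) {p q : Σ k : κ, m k × n k} (h : p.1 ≠ q.1) :
    ∑ s : Σ k : κ, m k × n k,
      sigBlock P Q p s * wf s * (starRingEnd ℂ) (sigBlock P Q q s) = 0 := by
  apply Finset.sum_eq_zero
  intro s _
  rcases eq_or_ne s.1 p.1 with hs | hs
  · have hs' : s.1 ≠ q.1 := by rw [hs]; exact h
    rw [sigBlock_off _ _ hs', map_zero, mul_zero]
  · rw [sigBlock_off _ _ hs, zero_mul, zero_mul]

lemma sigBlock_sum_same (P : ∀ k, Matrix (m k) (m k) ℂ) (Q : ∀ k, Matrix (n k) (n k) ℂ)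
    (u : ∀ k, m k → ℂ) (v : ∀ k, n k → ℂ) (k : κ) (i i' : m k) (j j' : n k) :
    ∑ s : Σ k : κ, m k × n k,
      sigBlock P Q ⟨k, (i, j)⟩ s * (u s.1 s.2.1 * v s.1 s.2.2) *
        (starRingEnd ℂ) (sigBlock P Q ⟨k, (i', j')⟩ s)
    = (∑ x, P k i x * u k x * (starRingEnd ℂ) (P k i' x)) *
      (∑ y, Q k j y * v k y * (starRingEnd ℂ) (Q k j' y)) := by
  rw [← Finset.univ_sigma_univ, Finset.sum_sigma]
  rw [Finset.sum_eq_single_of_mem k (Finset.mem_univ k)]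
  · rw [Finset.sum_mul_sum, Fintype.sum_prod_type]
    refine Finset.sum_congr rfl fun x _ => Finset.sum_congr rfl fun y _ => ?_
    rw [sigBlock_same, sigBlock_same, _root_.map_mul]
    ring
  · intro k' _ hk'
    apply Finset.sum_eq_zero
    intro s _
    rw [sigBlock_off _ _ (show (⟨k', s⟩ : Σ k : κ, m k × n k).1 ≠ k from hk'), zero_mul, zero_mul]

end core

section helpers
open Matrix Finset

variable {n : Type*} [Fintype n] [DecidableEq n]

lemma conj_diag_apply (U : Matrix n n ℂ) (c : n → ℂ) (i i' : n) :
    (U * Matrix.diagonal c * star U) i i' = ∑ j, U i j * c j * (starRingEnd ℂ) (U i' j) := by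
  rw [Matrix.mul_apply]
  refine Finset.sum_congr rfl fun j _ => ?_
  rw [Matrix.mul_diagonal, Matrix.star_eq_conjTranspose, Matrix.conjTranspose_apply]
  rfl

lemma vnEntropy_eq_sum_fent {M : Matrix n n ℂ} (hM : M.IsHermitian) :
    vnEntropy M = -∑ i, fent (hM.eigenvalues i) := by
  rw [vnEntropy, trace_mul_matLog hM]
  rw [show (∑ i, ((fent (hM.eigenvalues i) : ℂ))) = ((∑ i, fent (hM.eigenvalues i) : ℝ) : ℂ) by
    push_cast; ring]
  rw [Complex.ofReal_re]

lemma sum_eigenvalues_eq_one {M : Matrix n n ℂ} (hM : M.IsHermitian) (ht : M.trace = 1) :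
    ∑ i, hM.eigenvalues i = 1 := by
  have h1 : M.trace = ∑ i, (hM.eigenvalues i : ℂ) := by
    conv_lhs => rw [hM.spectral_theorem, Unitary.conjStarAlgAut_apply]
    rw [Matrix.trace_mul_cycle, Unitary.coe_star_mul_self, Matrix.one_mul,
      Matrix.trace_diagonal]
    rfl
  rw [ht] at h1
  have : ((∑ i, hM.eigenvalues i : ℝ) : ℂ) = 1 := by push_cast [← h1]; ring
  exact_mod_cast this

lemma unitary_entry_sum {U : Matrix n n ℂ} (hU : U ∈ Matrix.unitaryGroup n ℂ) (i i' : n) :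
    ∑ x, U i x * (starRingEnd ℂ) (U i' x) = if i = i' then 1 else 0 := by
  have h1 := Matrix.mem_unitaryGroup_iff.mp hU
  have h2 := congrFun (congrFun h1 i) i'
  rw [Matrix.mul_apply] at h2
  rw [show ∀ z, (1 : Matrix n n ℂ) z = _ from fun z => rfl] at h2
  calc ∑ x, U i x * (starRingEnd ℂ) (U i' x)
      = ∑ x, U i x * (star U) x i' := by
        refine Finset.sum_congr rfl fun x _ => ?_
        rw [Matrix.star_eq_conjTranspose, Matrix.conjTranspose_apply]
        rfl
    _ = (1 : Matrix n n ℂ) i i' := h2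
    _ = if i = i' then 1 else 0 := Matrix.one_apply

lemma spectral_entry {M : Matrix n n ℂ} (hM : M.IsHermitian) (i i' : n) :
    M i i' = ∑ x, (hM.eigenvectorUnitary : Matrix n n ℂ) i x * (hM.eigenvalues x : ℂ) *
      (starRingEnd ℂ) ((hM.eigenvectorUnitary : Matrix n n ℂ) i' x) := by
  conv_lhs => rw [hM.spectral_theorem, Unitary.conjStarAlgAut_apply]
  rw [conj_diag_apply]
  rfl

end helpers

section coreMain
set_option linter.unusedSectionVars false
open Matrix Finset

variable {κ : Type*} [Fintype κ] [DecidableEq κ]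
variable {m n : κ → Type*} [∀ k, Fintype (m k)] [∀ k, DecidableEq (m k)]
  [∀ k, Fintype (n k)] [∀ k, DecidableEq (n k)]
variable {ι : Type*} [Fintype ι] [DecidableEq ι]

lemma core_entropy (g : ι ≃ Σ k : κ, m k × n k) (lam : κ → ℝ)
    (A : ∀ k, Matrix (m k) (m k) ℂ) (hA : ∀ k, (A k).IsHermitian) (hAt : ∀ k, (A k).trace = 1)
    (B : ∀ k, Matrix (n k) (n k) ℂ) (hB : ∀ k, (B k).IsHermitian) (hBt : ∀ k, (B k).trace = 1)
    (M : Matrix ι ι ℂ)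
    (hMd : ∀ (k : κ) (i i' : m k) (j j' : n k),
      M (g.symm ⟨k, (i, j)⟩) (g.symm ⟨k, (i', j')⟩) = (lam k : ℂ) * A k i i' * B k j j')
    (hMo : ∀ x y : ι, (g x).1 ≠ (g y).1 → M x y = 0) :
    vnEntropy M = (-∑ k, fent (lam k))
      + ∑ k, lam k * (vnEntropy (A k) + vnEntropy (B k)) := by
  classical
  set P : ∀ k, Matrix (m k) (m k) ℂ := fun k => ((hA k).eigenvectorUnitary : Matrix (m k) (m k) ℂ)
    with hPdef
  set Q : ∀ k, Matrix (n k) (n k) ℂ := fun k => ((hB k).eigenvectorUnitary : Matrix (n k) (n k) ℂ)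
    with hQdef
  set a : ∀ k, m k → ℝ := fun k => (hA k).eigenvalues with hadef
  set b : ∀ k, n k → ℝ := fun k => (hB k).eigenvalues with hbdef
  have hPu : ∀ k, P k ∈ Matrix.unitaryGroup (m k) ℂ := fun k => (hA k).eigenvectorUnitary.2
  have hQu : ∀ k, Q k ∈ Matrix.unitaryGroup (n k) ℂ := fun k => (hB k).eigenvectorUnitary.2
  set W : Matrix ι ι ℂ := Matrix.of (fun x y => sigBlock P Q (g x) (g y)) with hWdef
  set d : ι → ℝ := fun x => lam (g x).1 * (a (g x).1 (g x).2.1 * b (g x).1 (g x).2.2) with hddef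
  -- W is unitary
  have hWapp : ∀ x y, W x y = sigBlock P Q (g x) (g y) := fun x y => rfl
  have hWunit : W * star W = 1 := by
    ext x y
    have expand : (W * star W) x y
        = ∑ z, sigBlock P Q (g x) (g z) * (1 * 1) *
            (starRingEnd ℂ) (sigBlock P Q (g y) (g z)) := by
      rw [Matrix.mul_apply]
      refine Finset.sum_congr rfl fun z _ => ?_
      rw [Matrix.star_eq_conjTranspose, Matrix.conjTranspose_apply, hWapp, hWapp]
      ring_nf
      rfl
    rw [expand, Equiv.sum_comp g (fun s => sigBlock P Q (g x) s * (1 * 1) *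
      (starRingEnd ℂ) (sigBlock P Q (g y) s))]
    rcases eq_or_ne (g x).1 (g y).1 with hk | hk
    · obtain ⟨p, rfl⟩ : ∃ p, x = g.symm p := ⟨g x, by simp⟩
      obtain ⟨q, rfl⟩ : ∃ q, y = g.symm q := ⟨g y, by simp⟩
      simp only [Equiv.apply_symm_apply] at hk ⊢
      obtain ⟨k, i, j⟩ := p
      obtain ⟨k', i', j'⟩ := q
      cases hk.symm
      have := sigBlock_sum_same P Q (fun k (_ : m k) => (1 : ℂ)) (fun k (_ : n k) => (1 : ℂ))
        k i i' j j'
      rw [this]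
      simp only [mul_one]
      rw [unitary_entry_sum (hPu k), unitary_entry_sum (hQu k)]
      rw [Matrix.one_apply]
      by_cases hii : i = i'
      · by_cases hjj : j = j'
        · subst hii; subst hjj; simp
        · subst hii
          rw [if_pos rfl, if_neg hjj, if_neg, mul_zero]
          intro hcon
          exact hjj (by
            have := g.symm.injective hcon
            simpa using this)
      · rw [if_neg hii, zero_mul, if_neg]
        intro hcon
        exact hii (And.left (by
          have := g.symm.injective hcon
          simpa using this))
    · rw [sigBlock_sum_off P Q _ hk, Matrix.one_apply_ne]
      intro hcon
      exact hk (by rw [hcon])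
  have hWmem : W ∈ Matrix.unitaryGroup ι ℂ := Matrix.mem_unitaryGroup_iff.mpr hWunit
  -- spectral decomposition of M
  have hMeq : M = W * Matrix.diagonal (fun x => ((d x : ℝ) : ℂ)) * star W := by
    ext x y
    rw [conj_diag_apply]
    have expand : ∑ z, W x z * ((d z : ℝ) : ℂ) * (starRingEnd ℂ) (W y z)
        = ∑ z, sigBlock P Q (g x) (g z) *
            (((lam (g z).1 : ℂ) * (a (g z).1 (g z).2.1 : ℂ)) * (b (g z).1 (g z).2.2 : ℂ)) *
            (starRingEnd ℂ) (sigBlock P Q (g y) (g z)) := by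
      refine Finset.sum_congr rfl fun z _ => ?_
      rw [hWapp, hWapp, hddef]
      push_cast
      ring
    rw [expand, Equiv.sum_comp g (fun s => sigBlock P Q (g x) s *
      (((lam s.1 : ℂ) * (a s.1 s.2.1 : ℂ)) * (b s.1 s.2.2 : ℂ)) *
      (starRingEnd ℂ) (sigBlock P Q (g y) s))]
    rcases eq_or_ne (g x).1 (g y).1 with hk | hk
    · obtain ⟨p, rfl⟩ : ∃ p, x = g.symm p := ⟨g x, by simp⟩
      obtain ⟨q, rfl⟩ : ∃ q, y = g.symm q := ⟨g y, by simp⟩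
      simp only [Equiv.apply_symm_apply] at hk ⊢
      obtain ⟨k, i, j⟩ := p
      obtain ⟨k', i', j'⟩ := q
      cases hk.symm
      have := sigBlock_sum_same P Q (fun k (x : m k) => (lam k : ℂ) * (a k x : ℂ))
        (fun k (y : n k) => (b k y : ℂ)) k i i' j j'
      rw [hMd, this]
      have hPA : ∑ x, P k i x * ((lam k : ℂ) * (a k x : ℂ)) * (starRingEnd ℂ) (P k i' x)
          = (lam k : ℂ) * A k i i' := by
        simp only [hPdef, hadef]
        rw [spectral_entry (hA k) i i', Finset.mul_sum]
        refine Finset.sum_congr rfl fun x _ => ?_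
        ring
      have hQB : ∑ y, Q k j y * (b k y : ℂ) * (starRingEnd ℂ) (Q k j' y) = B k j j' := by
        simp only [hQdef, hbdef]
        rw [spectral_entry (hB k) j j']
      rw [hPA, hQB]
    · rw [sigBlock_sum_off P Q _ hk, hMo _ _ hk]
  -- entropy computation
  rw [vnEntropy_unitary_conj W hWmem d hMeq]
  rw [show (∑ x, fent (d x))
      = ∑ x : ι, fent (lam (g x).1 * (a (g x).1 (g x).2.1 * b (g x).1 (g x).2.2)) from rfl]
  rw [Equiv.sum_comp g (fun s => fent (lam s.1 * (a s.1 s.2.1 * b s.1 s.2.2)))]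
  have hsa : ∀ k, ∑ i, a k i = 1 := fun k => sum_eigenvalues_eq_one (hA k) (hAt k)
  have hsb : ∀ k, ∑ j, b k j = 1 := fun k => sum_eigenvalues_eq_one (hB k) (hBt k)
  have hvA : ∀ k, vnEntropy (A k) = -∑ i, fent (a k i) := fun k => vnEntropy_eq_sum_fent (hA k)
  have hvB : ∀ k, vnEntropy (B k) = -∑ j, fent (b k j) := fun k => vnEntropy_eq_sum_fent (hB k)
  rw [← Finset.univ_sigma_univ, Finset.sum_sigma]
  have hblock : ∀ k, (∑ p : m k × n k, fent (lam k * (a k p.1 * b k p.2)))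
      = fent (lam k) + lam k * ((∑ i, fent (a k i)) + ∑ j, fent (b k j)) := by
    intro k
    rw [Fintype.sum_prod_type]
    have h1 : ∀ i, (∑ j, fent (lam k * (a k i * b k j)))
        = (a k i * fent (lam k) + lam k * fent (a k i)) * (∑ j, b k j)
          + (lam k * a k i) * ∑ j, fent (b k j) := by
      intro i
      rw [Finset.mul_sum, Finset.mul_sum, ← Finset.sum_add_distrib]
      refine Finset.sum_congr rfl fun j _ => ?_
      rw [fent_mul, fent_mul]
      ring
    calc ∑ i, ∑ j, fent (lam k * (a k i * b k j))
        = ∑ i, ((fent (lam k) + lam k * ∑ j, fent (b k j)) * a k i + lam k * fent (a k i)) := by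
          refine Finset.sum_congr rfl fun i _ => ?_
          rw [h1 i, hsb k]
          ring
      _ = (fent (lam k) + lam k * ∑ j, fent (b k j)) * (∑ i, a k i)
            + lam k * ∑ i, fent (a k i) := by
          rw [Finset.sum_add_distrib, ← Finset.mul_sum, ← Finset.mul_sum]
      _ = fent (lam k) + lam k * ((∑ i, fent (a k i)) + ∑ j, fent (b k j)) := by
          rw [hsa k]
          ring
  rw [Finset.sum_congr rfl fun k _ => hblock k]
  have hrhs : ∀ k, lam k * (vnEntropy (A k) + vnEntropy (B k))
      = -(lam k * ((∑ i, fent (a k i)) + ∑ j, fent (b k j))) := by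
    intro k
    rw [hvA k, hvB k]
    ring
  rw [Finset.sum_congr rfl fun k _ => hrhs k, Finset.sum_add_distrib, Finset.sum_neg_distrib]
  ring

end coreMain

section ptrace
open Matrix Finset

variable {a b : Type*} [Fintype a] [Fintype b]

lemma ptraceLeft_isHermitian {M : Matrix (a × b) (a × b) ℂ} (h : M.IsHermitian) :
    (ptraceLeft M).IsHermitian := by
  show (ptraceLeft M)ᴴ = ptraceLeft M
  ext i j
  rw [Matrix.conjTranspose_apply, ptraceLeft, Matrix.of_apply, Matrix.of_apply, star_sum]
  exact Finset.sum_congr rfl fun k _ => h.apply (k, i) (k, j)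

lemma ptraceRight_isHermitian {M : Matrix (a × b) (a × b) ℂ} (h : M.IsHermitian) :
    (ptraceRight M).IsHermitian := by
  show (ptraceRight M)ᴴ = ptraceRight M
  ext i j
  rw [Matrix.conjTranspose_apply, ptraceRight, Matrix.of_apply, Matrix.of_apply, star_sum]
  exact Finset.sum_congr rfl fun k _ => h.apply (i, k) (j, k)

lemma ptraceLeft_trace (M : Matrix (a × b) (a × b) ℂ) : (ptraceLeft M).trace = M.trace := by
  rw [Matrix.trace, Matrix.trace, Fintype.sum_prod_type]
  rw [Finset.sum_comm]
  rfl

lemma ptraceRight_trace (M : Matrix (a × b) (a × b) ℂ) : (ptraceRight M).trace = M.trace := by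
  rw [Matrix.trace, Matrix.trace, Fintype.sum_prod_type]
  rfl

end ptrace

open Matrix Finset

/-- a Markov state saturates strong subadditivity:
`S(ω_RS) + S(ω_SE) - S(ω_RSE) - S(ω_S) = 0`. -/
theorem markov_state_saturates_strong_subadditivity
    {r e : Type*} [Fintype r] [Fintype e] [DecidableEq r] [DecidableEq e]
    (K : ℕ) (l rr : Fin K → ℕ)
    (lam : Fin K → ℝ) (hlam : ∀ k, 0 ≤ lam k) (hsum : ∑ k, lam k = 1)
    (ωL : ∀ k, Matrix (r × Fin (l k)) (r × Fin (l k)) ℂ)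
    (hωL : ∀ k, IsDensity (ωL k))
    (ωR : ∀ k, Matrix (Fin (rr k) × e) (Fin (rr k) × e) ℂ)
    (hωR : ∀ k, IsDensity (ωR k))
    (ω : Matrix (r × (Σ k : Fin K, Fin (l k) × Fin (rr k)) × e)
                (r × (Σ k : Fin K, Fin (l k) × Fin (rr k)) × e) ℂ)
    (hω : ω = Matrix.of fun x y =>
      if h : x.2.1.1 = y.2.1.1 then
        (lam x.2.1.1 : ℂ) *
          ωL x.2.1.1 (x.1, x.2.1.2.1)
            (y.1, (h.symm ▸ y.2.1.2 : Fin (l x.2.1.1) × Fin (rr x.2.1.1)).1) *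
          ωR x.2.1.1 (x.2.1.2.2, x.2.2)
            ((h.symm ▸ y.2.1.2 : Fin (l x.2.1.1) × Fin (rr x.2.1.1)).2, y.2.2)
      else 0) :
    vnEntropy (Matrix.of fun (x y : r × (Σ k : Fin K, Fin (l k) × Fin (rr k))) =>
        ∑ k : e, ω (x.1, x.2, k) (y.1, y.2, k))
      + vnEntropy (ptraceLeft ω) - vnEntropy ω
      - vnEntropy (ptraceRight (ptraceLeft ω)) = 0 := by
  classical
  -- entrywise descriptions of ω
  have hωsame : ∀ (k : Fin K) (x1 y1 : r) (i i' : Fin (l k)) (j j' : Fin (rr k)) (t t' : e),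
      ω (x1, ⟨k, (i, j)⟩, t) (y1, ⟨k, (i', j')⟩, t')
        = (lam k : ℂ) * ωL k (x1, i) (y1, i') * ωR k (j, t) (j', t') := by
    intro k x1 y1 i i' j j' t t'
    rw [hω]
    show dite (k = k) _ _ = _
    rw [dif_pos rfl]
  have hωoff : ∀ x y, x.2.1.1 ≠ y.2.1.1 → ω x y = 0 := by
    intro x y h
    rw [hω]
    exact dif_neg h
  -- reduced density matrices
  set σ : ∀ k, Matrix (Fin (l k)) (Fin (l k)) ℂ := fun k => ptraceLeft (ωL k) with hσdef
  set ρ : ∀ k, Matrix (Fin (rr k)) (Fin (rr k)) ℂ := fun k => ptraceRight (ωR k) with hρdef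
  have hωLh : ∀ k, (ωL k).IsHermitian := fun k => (hωL k).1.1
  have hωRh : ∀ k, (ωR k).IsHermitian := fun k => (hωR k).1.1
  have hωLt : ∀ k, (ωL k).trace = 1 := fun k => (hωL k).2
  have hωRt : ∀ k, (ωR k).trace = 1 := fun k => (hωR k).2
  have hσh : ∀ k, (σ k).IsHermitian := fun k => ptraceLeft_isHermitian (hωLh k)
  have hρh : ∀ k, (ρ k).IsHermitian := fun k => ptraceRight_isHermitian (hωRh k)
  have hσt : ∀ k, (σ k).trace = 1 := fun k => by
    rw [hσdef]; rw [ptraceLeft_trace]; exact hωLt k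
  have hρt : ∀ k, (ρ k).trace = 1 := fun k => by
    rw [hρdef]; rw [ptraceRight_trace]; exact hωRt k
  -- the four equivalences
  let g₁ : (r × (Σ k0 : Fin K, Fin (l k0) × Fin (rr k0))) ≃ Σ k : Fin K, (r × Fin (l k)) × Fin (rr k) :=
    { toFun := fun x => ⟨x.2.1, ((x.1, x.2.2.1), x.2.2.2)⟩
      invFun := fun p => (p.2.1.1, ⟨p.1, (p.2.1.2, p.2.2)⟩)
      left_inv := by rintro ⟨x1, ⟨k, i, j⟩⟩; rfl
      right_inv := by rintro ⟨k, ⟨x1, i⟩, j⟩; rfl }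
  let g₂ : ((Σ k0 : Fin K, Fin (l k0) × Fin (rr k0)) × e) ≃ Σ k : Fin K, Fin (l k) × (Fin (rr k) × e) :=
    { toFun := fun x => ⟨x.1.1, (x.1.2.1, (x.1.2.2, x.2))⟩
      invFun := fun p => ((⟨p.1, (p.2.1, p.2.2.1)⟩ : (Σ k0 : Fin K, Fin (l k0) × Fin (rr k0))), p.2.2.2)
      left_inv := by rintro ⟨⟨k, i, j⟩, t⟩; rfl
      right_inv := by rintro ⟨k, i, j, t⟩; rfl }
  let g₃ : (r × (Σ k0 : Fin K, Fin (l k0) × Fin (rr k0)) × e) ≃ Σ k : Fin K, (r × Fin (l k)) × (Fin (rr k) × e) :=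
    { toFun := fun x => ⟨x.2.1.1, ((x.1, x.2.1.2.1), (x.2.1.2.2, x.2.2))⟩
      invFun := fun p => (p.2.1.1, ⟨p.1, (p.2.1.2, p.2.2.1)⟩, p.2.2.2)
      left_inv := by rintro ⟨x1, ⟨k, i, j⟩, t⟩; rfl
      right_inv := by rintro ⟨k, ⟨x1, i⟩, j, t⟩; rfl }
  let g₄ : (Σ k0 : Fin K, Fin (l k0) × Fin (rr k0)) ≃ Σ k : Fin K, Fin (l k) × Fin (rr k) := Equiv.refl _
  -- matrix 1 : ω_RS
  have E1 := core_entropy g₁ lam ωL hωLh hωLt ρ hρh hρt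
    (Matrix.of fun (x y : r × (Σ k0 : Fin K, Fin (l k0) × Fin (rr k0))) => ∑ t : e, ω (x.1, x.2, t) (y.1, y.2, t))
    (by
      intro k i i' j j'
      show (∑ t : e, ω (i.1, ⟨k, (i.2, j)⟩, t) (i'.1, ⟨k, (i'.2, j')⟩, t)) = _
      rw [Finset.sum_congr rfl fun t _ => hωsame k i.1 i'.1 i.2 i'.2 j j' t t,
        ← Finset.mul_sum]
      rfl)
    (by
      intro x y h
      exact Finset.sum_eq_zero fun t _ => hωoff _ _ h)
  -- matrix 2 : ω_SE
  have E2 := core_entropy g₂ lam σ hσh hσt ωR hωRh hωRt (ptraceLeft ω)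
    (by
      intro k i i' j j'
      show (∑ x1 : r, ω (x1, ⟨k, (i, j.1)⟩, j.2) (x1, ⟨k, (i', j'.1)⟩, j'.2))
        = (lam k : ℂ) * σ k i i' * ωR k (j.1, j.2) (j'.1, j'.2)
      rw [Finset.sum_congr rfl fun x1 _ => hωsame k x1 x1 i i' j.1 j'.1 j.2 j'.2]
      rw [Finset.sum_congr rfl fun x1 (_ : x1 ∈ Finset.univ) =>
        (by ring : (lam k : ℂ) * ωL k (x1, i) (x1, i') * ωR k (j.1, j.2) (j'.1, j'.2)
          = ((lam k : ℂ) * ωR k (j.1, j.2) (j'.1, j'.2)) * ωL k (x1, i) (x1, i')),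
        ← Finset.mul_sum]
      show _ = (lam k : ℂ) * (∑ x1 : r, ωL k (x1, i) (x1, i')) * ωR k (j.1, j.2) (j'.1, j'.2)
      ring
    )
    (by
      intro x y h
      exact Finset.sum_eq_zero fun x1 _ => hωoff _ _ h)
  -- matrix 3 : ω itself
  have E3 := core_entropy g₃ lam ωL hωLh hωLt ωR hωRh hωRt ω
    (by
      intro k i i' j j'
      exact hωsame k i.1 i'.1 i.2 i'.2 j.1 j'.1 j.2 j'.2)
    (by
      intro x y h
      exact hωoff _ _ h)
  -- matrix 4 : ω_S
  have E4 := core_entropy g₄ lam σ hσh hσt ρ hρh hρt (ptraceRight (ptraceLeft ω))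
    (by
      intro k i i' j j'
      have h4 : ∀ t : e, ptraceLeft ω ((⟨k, (i, j)⟩ : (Σ k0 : Fin K, Fin (l k0) × Fin (rr k0))), t) ((⟨k, (i', j')⟩ : (Σ k0 : Fin K, Fin (l k0) × Fin (rr k0))), t)
          = ((lam k : ℂ) * (∑ x1 : r, ωL k (x1, i) (x1, i'))) * ωR k (j, t) (j', t) := by
        intro t
        show (∑ x1 : r, ω (x1, ⟨k, (i, j)⟩, t) (x1, ⟨k, (i', j')⟩, t)) = _
        rw [Finset.sum_congr rfl fun x1 _ => hωsame k x1 x1 i i' j j' t t]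
        rw [Finset.sum_congr rfl fun x1 (_ : x1 ∈ Finset.univ) =>
          (by ring : (lam k : ℂ) * ωL k (x1, i) (x1, i') * ωR k (j, t) (j', t)
            = ((lam k : ℂ) * ωR k (j, t) (j', t)) * ωL k (x1, i) (x1, i')),
          ← Finset.mul_sum]
        ring
      show (∑ t : e, ptraceLeft ω ((⟨k, (i, j)⟩ : (Σ k0 : Fin K, Fin (l k0) × Fin (rr k0))), t) ((⟨k, (i', j')⟩ : (Σ k0 : Fin K, Fin (l k0) × Fin (rr k0))), t)) = _
      rw [Finset.sum_congr rfl fun t _ => h4 t, ← Finset.mul_sum]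
      rfl)
    (by
      intro x y h
      refine Finset.sum_eq_zero fun t _ => ?_
      show (∑ x1 : r, ω (x1, x, t) (x1, y, t)) = 0
      exact Finset.sum_eq_zero fun x1 _ => hωoff _ _ h)
  rw [E1, E2, E3, E4]
  have key : (∑ k, lam k * (vnEntropy (ωL k) + vnEntropy (ρ k)))
      + (∑ k, lam k * (vnEntropy (σ k) + vnEntropy (ωR k)))
      = (∑ k, lam k * (vnEntropy (ωL k) + vnEntropy (ωR k)))
      + (∑ k, lam k * (vnEntropy (σ k) + vnEntropy (ρ k))) := by
    rw [← Finset.sum_add_distrib, ← Finset.sum_add_distrib]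
    exact Finset.sum_congr rfl fun k _ => by ring
  linarith [key]
end

section
/- Define ω_{RSE} = (1/2)(|1_R 1_S 1_E⟩⟨1_R 1_S 1_E| + (1/(d_S d_E)) |2_R⟩⟨2_R| ⊗ I_{SE}) with d_S = d_E = 2. Then S(ω_{RS}) + S(ω_{SE}) − S(ω_{RSE}) − S(ω_S) > 0, i.e., the conditional mutual information I(R:E|S) is strictly positive. -/
open scoped Kronecker ComplexOrder Matrix

namespace CMIAux

open Matrix Polynomial

variable {n : Type*} [Fintype n] [DecidableEq n]

lemma charpoly_conj (P A : Matrix n n ℂ) (hP : P * star P = 1) :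
    (P * A * star P).charpoly = A.charpoly := by
  classical
  set f := ((Polynomial.C : ℂ →+* ℂ[X]).mapMatrix : Matrix n n ℂ →+* Matrix n n ℂ[X]) with hf
  have hmap : f P * f (star P) = 1 := by rw [← _root_.map_mul, hP, _root_.map_one]
  have hmap' : f (star P) * f P = 1 := mul_eq_one_comm.mp hmap
  have comm : (Matrix.scalar n (X : ℂ[X])) * f (star P) = f (star P) * Matrix.scalar n X :=
    (Matrix.scalar_commute (X : ℂ[X]) (fun r => Commute.all _ _) _).eq
  have key : charmatrix (P * A * star P) = f P * charmatrix A * f (star P) := by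
    unfold charmatrix
    rw [mul_sub, sub_mul]
    congr 1
    · rw [mul_assoc, comm, ← mul_assoc, hmap, one_mul]
    · rw [_root_.map_mul, _root_.map_mul]
  rw [Matrix.charpoly, Matrix.charpoly, key, det_mul, det_mul, mul_comm, ← mul_assoc,
    ← det_mul, hmap', det_one, one_mul]

lemma charpoly_diag (g : n → ℂ) :
    (Matrix.diagonal g).charpoly = ∏ i, (X - Polynomial.C (g i)) := by
  have h : charmatrix (Matrix.diagonal g) = Matrix.diagonal fun i => X - Polynomial.C (g i) := by
    ext i j
    by_cases hij : i = j
    · subst hij; simp [charmatrix_apply_eq]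
    · rw [charmatrix_apply_ne _ _ _ hij]
      simp [Matrix.diagonal_apply_ne _ hij]
  rw [Matrix.charpoly, h, det_diagonal]

lemma eig_multiset (W : Matrix n n ℂ) (hW : W * star W = 1) (d : n → ℝ)
    (M : Matrix n n ℂ) (hM : M = W * Matrix.diagonal (fun i => (d i : ℂ)) * star W)
    (hH : M.IsHermitian) :
    Finset.univ.val.map hH.eigenvalues = Finset.univ.val.map d := by
  have hV : (hH.eigenvectorUnitary : Matrix n n ℂ) * star (hH.eigenvectorUnitary : Matrix n n ℂ) = 1 :=
    Matrix.mem_unitaryGroup_iff.mp hH.eigenvectorUnitary.2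
  have hA := charpoly_conj (hH.eigenvectorUnitary : Matrix n n ℂ)
    (Matrix.diagonal (RCLike.ofReal ∘ hH.eigenvalues)) hV
  rw [← (show M = (hH.eigenvectorUnitary : Matrix n n ℂ) * Matrix.diagonal (RCLike.ofReal ∘ hH.eigenvalues) * star (hH.eigenvectorUnitary : Matrix n n ℂ) from hH.spectral_theorem)] at hA
  have hB := charpoly_conj W (Matrix.diagonal (fun i => (d i : ℂ))) hW
  rw [← hM] at hB
  have h1 : (Matrix.diagonal (RCLike.ofReal ∘ hH.eigenvalues) : Matrix n n ℂ).charpoly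
      = (Matrix.diagonal (fun i => (d i : ℂ))).charpoly := by rw [← hA, ← hB]
  rw [charpoly_diag, charpoly_diag] at h1
  have e1 := congrArg Polynomial.roots h1
  rw [Finset.prod_eq_multiset_prod, Finset.prod_eq_multiset_prod,
    show (Multiset.map (fun i => X - Polynomial.C ((RCLike.ofReal ∘ hH.eigenvalues) i)) Finset.univ.val)
      = Multiset.map (fun a => X - Polynomial.C a)
        (Multiset.map (fun i => ((hH.eigenvalues i : ℝ) : ℂ)) Finset.univ.val) by
      rw [Multiset.map_map]; rfl,
    show (Multiset.map (fun i => X - Polynomial.C (((d i : ℝ)) : ℂ)) Finset.univ.val)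
      = Multiset.map (fun a => X - Polynomial.C a)
        (Multiset.map (fun i => ((d i : ℝ) : ℂ)) Finset.univ.val) by
      rw [Multiset.map_map]; rfl,
    Polynomial.roots_multiset_prod_X_sub_C, Polynomial.roots_multiset_prod_X_sub_C] at e1
  apply Multiset.map_injective (α := ℝ) (β := ℂ) Complex.ofReal_injective
  rw [Multiset.map_map, Multiset.map_map]
  exact e1

lemma trace_aux (M V : Matrix n n ℂ) (lam : n → ℝ) (hV' : star V * V = 1)
    (hspec : M = V * Matrix.diagonal (fun i => (lam i : ℂ)) * star V)
    (L : Matrix n n ℂ)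
    (hL : L = V * Matrix.diagonal (fun i => (Real.log (lam i) : ℂ)) * star V) :
    (M * L).trace = ∑ i, ((lam i : ℂ) * (Real.log (lam i) : ℂ)) := by
  subst hspec hL
  have hMM : V * Matrix.diagonal (fun i => (lam i : ℂ)) * star V *
      (V * Matrix.diagonal (fun i => (Real.log (lam i) : ℂ)) * star V)
      = V * (Matrix.diagonal (fun i => (lam i : ℂ)) *
        (Matrix.diagonal (fun i => (Real.log (lam i) : ℂ)) * star V)) := by
    simp only [Matrix.mul_assoc]
    rw [← Matrix.mul_assoc (star V) V, hV', Matrix.one_mul]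
  rw [hMM, Matrix.trace_mul_comm]
  simp only [Matrix.mul_assoc]
  rw [hV', Matrix.mul_one, Matrix.diagonal_mul_diagonal, Matrix.trace_diagonal]

lemma vnEntropy_of_diag (W : Matrix n n ℂ) (hW : W * star W = 1) (d : n → ℝ)
    (M : Matrix n n ℂ) (hM : M = W * Matrix.diagonal (fun i => (d i : ℂ)) * star W) :
    vnEntropy M = -∑ i, d i * Real.log (d i) := by
  have hdiag : (Matrix.diagonal (fun i => (d i : ℂ))).IsHermitian := by
    have hst : (star fun i => ((d i : ℝ) : ℂ)) = fun i => ((d i : ℝ) : ℂ) := by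
      funext i
      exact Complex.conj_ofReal _
    rw [Matrix.IsHermitian, Matrix.diagonal_conjTranspose, hst]
  have hH : M.IsHermitian := by
    rw [hM, Matrix.star_eq_conjTranspose]
    exact Matrix.isHermitian_mul_mul_conjTranspose W hdiag
  set V : Matrix n n ℂ := (hH.eigenvectorUnitary : Matrix n n ℂ) with hVdef
  have hV' : star V * V = 1 := Matrix.mem_unitaryGroup_iff'.mp hH.eigenvectorUnitary.2
  have hlog : matLog M = V * Matrix.diagonal (fun i => (Real.log (hH.eigenvalues i) : ℂ)) * star V := by
    rw [matLog, dif_pos hH]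
  have hspec : M = V * Matrix.diagonal (RCLike.ofReal ∘ hH.eigenvalues) * star V :=
    hH.spectral_theorem
  have htr : (M * matLog M).trace
      = ∑ i, ((hH.eigenvalues i : ℂ) * (Real.log (hH.eigenvalues i) : ℂ)) :=
    trace_aux M V hH.eigenvalues hV' hspec (matLog M) hlog
  have hmult := eig_multiset W hW d M hM hH
  have hsum : ∑ i, hH.eigenvalues i * Real.log (hH.eigenvalues i)
      = ∑ i, d i * Real.log (d i) := by
    have key : ∀ (g : n → ℝ), ∑ i, g i * Real.log (g i)
        = ((Finset.univ.val.map g).map (fun x => x * Real.log x)).sum := by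
      intro g
      rw [Multiset.map_map, Finset.sum_eq_multiset_sum]
      rfl
    rw [key, key, hmult]
  rw [vnEntropy, htr, ← hsum]
  rw [Complex.re_sum]
  congr 1
  apply Finset.sum_congr rfl
  intro i _
  rw [← Complex.ofReal_mul, Complex.ofReal_re]

noncomputable def mkU (v : Fin 2 → ℂ) : Matrix (Fin 2) (Fin 2) ℂ :=
  !![v 0, -(starRingEnd ℂ) (v 1); v 1, (starRingEnd ℂ) (v 0)]

lemma star_kron {m p : Type*} [Fintype m] [Fintype p] [DecidableEq m] [DecidableEq p]
    (A : Matrix m m ℂ) (B : Matrix p p ℂ) :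
    star (A ⊗ₖ B) = star A ⊗ₖ star B := by
  ext ⟨i, j⟩ ⟨k, l⟩
  simp [Matrix.star_eq_conjTranspose, Matrix.conjTranspose_apply, Matrix.kroneckerMap_apply,
    _root_.map_mul]

lemma conj_kron {m p : Type*} [Fintype m] [Fintype p] [DecidableEq m] [DecidableEq p]
    (A P : Matrix m m ℂ) (B Q : Matrix p p ℂ) :
    (A ⊗ₖ B) * (P ⊗ₖ Q) * star (A ⊗ₖ B) = (A * P * star A) ⊗ₖ (B * Q * star B) := by
  rw [star_kron, Matrix.mul_kronecker_mul, Matrix.mul_kronecker_mul]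

lemma mkU_mul_star (v : Fin 2 → ℂ) (hv : star v ⬝ᵥ v = 1) :
    mkU v * star (mkU v) = 1 := by
  have hv' : (starRingEnd ℂ) (v 0) * v 0 + (starRingEnd ℂ) (v 1) * v 1 = 1 := by
    simpa [dotProduct, Fin.sum_univ_two] using hv
  ext i j
  fin_cases i <;> fin_cases j <;>
    simp [mkU, Matrix.mul_apply, Fin.sum_univ_two, Matrix.star_eq_conjTranspose,
      Matrix.conjTranspose_apply, Matrix.one_apply] <;>
    ring_nf <;>
    (first
      | linear_combination hv'
      | linear_combination -hv'
      | ring)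

lemma mkU_E00 (v : Fin 2 → ℂ) :
    mkU v * Matrix.single (0 : Fin 2) (0 : Fin 2) (1 : ℂ) * star (mkU v)
      = Matrix.vecMulVec v (star v) := by
  ext i j
  fin_cases i <;> fin_cases j <;>
    simp [mkU, Matrix.mul_apply, Fin.sum_univ_two, Matrix.star_eq_conjTranspose,
      Matrix.conjTranspose_apply, Matrix.vecMulVec_apply, Matrix.single,
      Matrix.vecHead, Matrix.vecTail] <;> ring

noncomputable def dRSE : Fin 2 × Fin 2 × Fin 2 → ℝ :=
  fun p => if p.1 = 0 then (if p.2.1 = 0 ∧ p.2.2 = 0 then 1/2 else 0) else 1/8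
noncomputable def dSE : Fin 2 × Fin 2 → ℝ := fun p => if p.1 = 0 ∧ p.2 = 0 then 5/8 else 1/8
noncomputable def dRS : Fin 2 × Fin 2 → ℝ :=
  fun p => if p.1 = 0 then (if p.2 = 0 then 1/2 else 0) else 1/4
noncomputable def dS : Fin 2 → ℝ := fun i => if i = 0 then 3/4 else 1/4

set_option maxHeartbeats 2000000 in
lemma hD1 : Matrix.diagonal (fun p => ((dRSE p : ℝ) : ℂ)) =
    (1/2 : ℂ) • (Matrix.single (0 : Fin 2) (0 : Fin 2) (1 : ℂ) ⊗ₖ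
      (Matrix.single (0 : Fin 2) (0 : Fin 2) (1 : ℂ) ⊗ₖ
        Matrix.single (0 : Fin 2) (0 : Fin 2) (1 : ℂ))) +
    (1/8 : ℂ) • (Matrix.single (1 : Fin 2) (1 : Fin 2) (1 : ℂ) ⊗ₖ
      (1 : Matrix (Fin 2 × Fin 2) (Fin 2 × Fin 2) ℂ)) := by
  ext ⟨a, b, c⟩ ⟨x, y, z⟩
  fin_cases a <;> fin_cases b <;> fin_cases c <;> fin_cases x <;> fin_cases y <;> fin_cases z <;>
    simp [dRSE, Matrix.diagonal_apply, Matrix.single, Matrix.one_apply, Prod.ext_iff] <;>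
    norm_num

lemma hD2 : Matrix.diagonal (fun p => ((dSE p : ℝ) : ℂ)) =
    (1/2 : ℂ) • (Matrix.single (0 : Fin 2) (0 : Fin 2) (1 : ℂ) ⊗ₖ
      Matrix.single (0 : Fin 2) (0 : Fin 2) (1 : ℂ)) +
    (1/8 : ℂ) • (1 : Matrix (Fin 2 × Fin 2) (Fin 2 × Fin 2) ℂ) := by
  ext ⟨a, b⟩ ⟨x, y⟩
  fin_cases a <;> fin_cases b <;> fin_cases x <;> fin_cases y <;>
    simp [dSE, Matrix.diagonal_apply, Matrix.single, Matrix.one_apply, Prod.ext_iff] <;>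
    norm_num

lemma hD3 : Matrix.diagonal (fun p => ((dRS p : ℝ) : ℂ)) =
    (1/2 : ℂ) • (Matrix.single (0 : Fin 2) (0 : Fin 2) (1 : ℂ) ⊗ₖ
      Matrix.single (0 : Fin 2) (0 : Fin 2) (1 : ℂ)) +
    (1/4 : ℂ) • (Matrix.single (1 : Fin 2) (1 : Fin 2) (1 : ℂ) ⊗ₖ
      (1 : Matrix (Fin 2) (Fin 2) ℂ)) := by
  ext ⟨a, b⟩ ⟨x, y⟩
  fin_cases a <;> fin_cases b <;> fin_cases x <;> fin_cases y <;>
    simp [dRS, Matrix.diagonal_apply, Matrix.single, Matrix.one_apply, Prod.ext_iff] <;>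
    norm_num

lemma hD4 : Matrix.diagonal (fun i => ((dS i : ℝ) : ℂ)) =
    (1/2 : ℂ) • Matrix.single (0 : Fin 2) (0 : Fin 2) (1 : ℂ) +
    (1/4 : ℂ) • (1 : Matrix (Fin 2) (Fin 2) ℂ) := by
  ext a x
  fin_cases a <;> fin_cases x <;>
    simp [dS, Matrix.diagonal_apply, Matrix.single, Matrix.one_apply] <;> norm_num

lemma log_pos_combo : 0 < 4 * Real.log 2 + 6 * Real.log 3 - 5 * Real.log 5 := by
  have h := Real.log_lt_log (by norm_num : (0:ℝ) < 3125) (by norm_num : (3125:ℝ) < 11664)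
  rw [show (3125:ℝ) = 5^5 by norm_num, show (11664:ℝ) = 2^4 * 3^6 by norm_num,
    Real.log_mul (by positivity) (by positivity), Real.log_pow, Real.log_pow, Real.log_pow] at h
  push_cast at h
  linarith

end CMIAux

open CMIAux in
set_option maxHeartbeats 2000000 in
/-- for the concrete non-Markov reference state with `d_S = d_E = 2`, the
conditional mutual information `I(R:E|S)` is strictly positive. -/
theorem conditional_mutInfo_pos_for_reference_state
    (v u : Fin 2 → ℂ) (hv : star v ⬝ᵥ v = 1) (hu : star u ⬝ᵥ u = 1)
    (ω : Matrix (Fin 2 × Fin 2 × Fin 2) (Fin 2 × Fin 2 × Fin 2) ℂ)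
    (hω : ω = (1/2 : ℂ) •
      (Matrix.single (0 : Fin 2) (0 : Fin 2) (1 : ℂ) ⊗ₖ
          (Matrix.vecMulVec v (star v) ⊗ₖ Matrix.vecMulVec u (star u)) +
        (1/4 : ℂ) • (Matrix.single (1 : Fin 2) (1 : Fin 2) (1 : ℂ) ⊗ₖ
          (1 : Matrix (Fin 2 × Fin 2) (Fin 2 × Fin 2) ℂ)))) :
    0 < vnEntropy (Matrix.of fun (x y : Fin 2 × Fin 2) =>
          ∑ k : Fin 2, ω (x.1, x.2, k) (y.1, y.2, k))
        + vnEntropy (ptraceLeft ω) - vnEntropy ω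
        - vnEntropy (ptraceRight (ptraceLeft ω)) := by
  have hu' : (starRingEnd ℂ) (u 0) * u 0 + (starRingEnd ℂ) (u 1) * u 1 = 1 := by
    simpa [dotProduct, Fin.sum_univ_two] using hu
  -- reduced states
  have hB2 : ptraceLeft ω = (1/2 : ℂ) •
      (Matrix.vecMulVec v (star v) ⊗ₖ Matrix.vecMulVec u (star u)) +
      (1/8 : ℂ) • (1 : Matrix (Fin 2 × Fin 2) (Fin 2 × Fin 2) ℂ) := by
    ext ⟨b, c⟩ ⟨e, f⟩
    rw [hω]
    simp only [ptraceLeft, Matrix.of_apply, Matrix.add_apply, Matrix.smul_apply,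
      Matrix.kroneckerMap_apply, Matrix.single, Matrix.one_apply,
      Matrix.vecMulVec_apply, smul_eq_mul, Fin.sum_univ_two]
    fin_cases b <;> fin_cases c <;> fin_cases e <;> fin_cases f <;>
      simp [Prod.ext_iff] <;> (first | decide | ring)
  have hB3 : (Matrix.of fun (x y : Fin 2 × Fin 2) =>
        ∑ k : Fin 2, ω (x.1, x.2, k) (y.1, y.2, k)) = (1/2 : ℂ) •
      (Matrix.single (0 : Fin 2) (0 : Fin 2) (1 : ℂ) ⊗ₖ Matrix.vecMulVec v (star v)) +
      (1/4 : ℂ) • (Matrix.single (1 : Fin 2) (1 : Fin 2) (1 : ℂ) ⊗ₖ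
        (1 : Matrix (Fin 2) (Fin 2) ℂ)) := by
    ext ⟨a, b⟩ ⟨c, e⟩
    rw [hω]
    simp only [Matrix.of_apply, Matrix.add_apply, Matrix.smul_apply,
      Matrix.kroneckerMap_apply, Matrix.single, Matrix.one_apply,
      Matrix.vecMulVec_apply, smul_eq_mul, Fin.sum_univ_two]
    fin_cases a <;> fin_cases c <;> fin_cases b <;> fin_cases e <;> simp <;>
      (first
        | linear_combination (v 0 * (starRingEnd ℂ) (v 0) / 2) * hu'
        | linear_combination (v 0 * (starRingEnd ℂ) (v 1) / 2) * hu'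
        | linear_combination (v 1 * (starRingEnd ℂ) (v 0) / 2) * hu'
        | linear_combination (v 1 * (starRingEnd ℂ) (v 1) / 2) * hu'
        | decide
        | ring)
  have hB4 : ptraceRight (ptraceLeft ω) = (1/2 : ℂ) • Matrix.vecMulVec v (star v) +
      (1/4 : ℂ) • (1 : Matrix (Fin 2) (Fin 2) ℂ) := by
    ext b e
    simp only [ptraceRight, Matrix.of_apply, hB2, Matrix.add_apply, Matrix.smul_apply,
      Matrix.kroneckerMap_apply, Matrix.vecMulVec_apply, Matrix.one_apply, smul_eq_mul,
      Fin.sum_univ_two, Prod.mk.injEq]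
    fin_cases b <;> fin_cases e <;> simp <;>
      (first
        | linear_combination (v 0 * (starRingEnd ℂ) (v 0) / 2) * hu'
        | linear_combination (v 0 * (starRingEnd ℂ) (v 1) / 2) * hu'
        | linear_combination (v 1 * (starRingEnd ℂ) (v 0) / 2) * hu'
        | linear_combination (v 1 * (starRingEnd ℂ) (v 1) / 2) * hu'
        | decide
        | ring)
  -- unitaries
  have hUv := mkU_mul_star v hv
  have hUu := mkU_mul_star u hu
  have hW2u : (mkU v ⊗ₖ mkU u) * star (mkU v ⊗ₖ mkU u) = 1 := by
    rw [star_kron, ← Matrix.mul_kronecker_mul, hUv, hUu, Matrix.one_kronecker_one]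
  have hW1u : ((1 : Matrix (Fin 2) (Fin 2) ℂ) ⊗ₖ (mkU v ⊗ₖ mkU u)) *
      star ((1 : Matrix (Fin 2) (Fin 2) ℂ) ⊗ₖ (mkU v ⊗ₖ mkU u)) = 1 := by
    rw [star_kron, ← Matrix.mul_kronecker_mul, hW2u, star_one, one_mul,
      Matrix.one_kronecker_one]
  have hW3u : ((1 : Matrix (Fin 2) (Fin 2) ℂ) ⊗ₖ mkU v) *
      star ((1 : Matrix (Fin 2) (Fin 2) ℂ) ⊗ₖ mkU v) = 1 := by
    rw [star_kron, ← Matrix.mul_kronecker_mul, hUv, star_one, one_mul,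
      Matrix.one_kronecker_one]
  -- diagonalizations
  have hA1 : ω = ((1 : Matrix (Fin 2) (Fin 2) ℂ) ⊗ₖ (mkU v ⊗ₖ mkU u)) *
      Matrix.diagonal (fun p => ((dRSE p : ℝ) : ℂ)) *
      star ((1 : Matrix (Fin 2) (Fin 2) ℂ) ⊗ₖ (mkU v ⊗ₖ mkU u)) := by
    rw [hD1]
    rw [Matrix.mul_add, Matrix.add_mul, Matrix.mul_smul, Matrix.smul_mul, Matrix.mul_smul,
      Matrix.smul_mul]
    rw [conj_kron, conj_kron, conj_kron]
    rw [mkU_E00, mkU_E00]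
    simp only [one_mul, mul_one, star_one]
    rw [hW2u]
    rw [hω, smul_add, smul_smul]
    norm_num
  have hA2 : ptraceLeft ω = (mkU v ⊗ₖ mkU u) *
      Matrix.diagonal (fun p => ((dSE p : ℝ) : ℂ)) * star (mkU v ⊗ₖ mkU u) := by
    rw [hD2]
    rw [Matrix.mul_add, Matrix.add_mul, Matrix.mul_smul, Matrix.smul_mul, Matrix.mul_smul,
      Matrix.smul_mul]
    rw [conj_kron, mkU_E00, mkU_E00]
    simp only [one_mul, mul_one, star_one]
    rw [hW2u, hB2]
  have hA3 : (Matrix.of fun (x y : Fin 2 × Fin 2) =>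
        ∑ k : Fin 2, ω (x.1, x.2, k) (y.1, y.2, k))
      = ((1 : Matrix (Fin 2) (Fin 2) ℂ) ⊗ₖ mkU v) *
      Matrix.diagonal (fun p => ((dRS p : ℝ) : ℂ)) *
      star ((1 : Matrix (Fin 2) (Fin 2) ℂ) ⊗ₖ mkU v) := by
    rw [hD3]
    rw [Matrix.mul_add, Matrix.add_mul, Matrix.mul_smul, Matrix.smul_mul, Matrix.mul_smul,
      Matrix.smul_mul]
    rw [conj_kron, conj_kron, mkU_E00]
    simp only [one_mul, mul_one, star_one]
    rw [hUv, hB3]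
  have hA4 : ptraceRight (ptraceLeft ω)
      = mkU v * Matrix.diagonal (fun i => ((dS i : ℝ) : ℂ)) * star (mkU v) := by
    rw [hD4]
    rw [Matrix.mul_add, Matrix.add_mul, Matrix.mul_smul, Matrix.smul_mul, Matrix.mul_smul,
      Matrix.smul_mul]
    rw [mkU_E00]
    simp only [one_mul, mul_one, star_one]
    rw [hUv, hB4]
  -- entropies
  have e1 := vnEntropy_of_diag _ hW1u dRSE ω hA1
  have e2 := vnEntropy_of_diag _ hW2u dSE (ptraceLeft ω) hA2
  have e3 := vnEntropy_of_diag _ hW3u dRS _ hA3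
  have e4 := vnEntropy_of_diag (mkU v) hUv dS (ptraceRight (ptraceLeft ω)) hA4
  rw [e1, e2, e3, e4]
  simp only [dRSE, dSE, dRS, dS, Fintype.sum_prod_type, Fin.sum_univ_two]
  norm_num
  have l2 : Real.log (1/2 : ℝ) = -Real.log 2 := by
    rw [one_div, Real.log_inv]
  have l4 : Real.log (1/4 : ℝ) = -(2 * Real.log 2) := by
    rw [show (1/4 : ℝ) = (2^2)⁻¹ by norm_num, Real.log_inv, Real.log_pow]
    push_cast
    ring
  have l8 : Real.log (1/8 : ℝ) = -(3 * Real.log 2) := by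
    rw [show (1/8 : ℝ) = (2^3)⁻¹ by norm_num, Real.log_inv, Real.log_pow]
    push_cast
    ring
  have l58 : Real.log (5/8 : ℝ) = Real.log 5 - 3 * Real.log 2 := by
    rw [Real.log_div (by norm_num) (by norm_num), show (8 : ℝ) = 2^3 by norm_num, Real.log_pow]
    push_cast
    ring
  have l34 : Real.log (3/4 : ℝ) = Real.log 3 - 2 * Real.log 2 := by
    rw [Real.log_div (by norm_num) (by norm_num), show (4 : ℝ) = 2^2 by norm_num, Real.log_pow]
    push_cast
    ring
  rw [l2, l4, l8, l58, l34]
  linarith [log_pos_combo]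
end

section
/- Let Λ_S be the linear map from 2×2 matrices to 4×4 matrices defined by Λ_S(σ^{(i)}) = (1/2) σ^{(i)} ⊗ I_E for i = 1,2,3 and Λ_S(I_S) = (1/2)(I_{SE} + a Σ_{i=1}^3 σ^{(i)} ⊗ σ^{(i)}), where a ≠ 0 is real. Then Λ_S is trace-preserving and Hermiticity-preserving but not a positive map. -/
open scoped Kronecker ComplexOrder Matrix

/-- The Pauli matrices. -/
noncomputable def pauli : Fin 3 → Matrix (Fin 2) (Fin 2) ℂ
  | 0 => !![0, 1; 1, 0]
  | 1 => !![0, -Complex.I; Complex.I, 0]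
  | 2 => !![1, 0; 0, -1]


lemma pauli_decomp (X : Matrix (Fin 2) (Fin 2) ℂ) :
    X = ((X 0 0 + X 1 1)/2) • (1 : Matrix (Fin 2) (Fin 2) ℂ)
      + ((X 0 1 + X 1 0)/2) • pauli 0
      + (Complex.I * (X 0 1 - X 1 0)/2) • pauli 1
      + ((X 0 0 - X 1 1)/2) • pauli 2 := by
  ext i j
  fin_cases i <;> fin_cases j <;>
    simp [pauli, Matrix.one_apply, Complex.ext_iff] <;> ring_nf <;> simp

lemma psd_diag_nonneg {n : Type*} [Fintype n] [DecidableEq n]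
    {M : Matrix n n ℂ} (h : M.PosSemidef) (i : n) : 0 ≤ M i i := by
  have := h.dotProduct_mulVec_nonneg (Pi.single i 1)
  simpa [dotProduct, Matrix.mulVec, Pi.single_apply] using this


lemma trace_pauli_kron_one (i : Fin 3) :
    (pauli i ⊗ₖ (1 : Matrix (Fin 2) (Fin 2) ℂ)).trace = 0 := by
  fin_cases i <;>
    simp [Matrix.trace_kronecker, pauli, Matrix.trace_fin_two]

lemma trace_pauli_kron_pauli (i : Fin 3) :
    (pauli i ⊗ₖ pauli i).trace = 0 := by
  fin_cases i <;>
    simp [Matrix.trace_kronecker, pauli, Matrix.trace_fin_two]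


set_option maxHeartbeats 2000000 in
lemma herm_aux (a : ℝ)
    (Λ : Matrix (Fin 2) (Fin 2) ℂ →ₗ[ℂ] Matrix (Fin 2 × Fin 2) (Fin 2 × Fin 2) ℂ)
    (X : Matrix (Fin 2) (Fin 2) ℂ)
    (key : ∀ X : Matrix (Fin 2) (Fin 2) ℂ, Λ X =
      ((X 0 0 + X 1 1)/2) • ((1/2 : ℂ) •
        ((1 : Matrix (Fin 2 × Fin 2) (Fin 2 × Fin 2) ℂ) + (a : ℂ) • ∑ i, pauli i ⊗ₖ pauli i))
      + ((X 0 1 + X 1 0)/2) • ((1/2 : ℂ) • (pauli 0 ⊗ₖ (1 : Matrix (Fin 2) (Fin 2) ℂ)))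
      + (Complex.I * (X 0 1 - X 1 0)/2) • ((1/2 : ℂ) • (pauli 1 ⊗ₖ (1 : Matrix (Fin 2) (Fin 2) ℂ)))
      + ((X 0 0 - X 1 1)/2) • ((1/2 : ℂ) • (pauli 2 ⊗ₖ (1 : Matrix (Fin 2) (Fin 2) ℂ)))) :
    Λ Xᴴ = (Λ X)ᴴ := by
  rw [key Xᴴ, key X]
  ext ⟨i, j⟩ ⟨k, l⟩
  fin_cases i <;> fin_cases j <;> fin_cases k <;> fin_cases l <;>
    simp [pauli, Matrix.conjTranspose_apply, Matrix.add_apply, Matrix.smul_apply,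
      Matrix.kroneckerMap_apply, Matrix.one_apply, Fin.sum_univ_three,
      map_add, map_sub, map_mul, map_div₀, Complex.conj_I, Complex.conj_ofReal,
      smul_eq_mul, Matrix.sum_apply, Prod.ext_iff] <;> ring

set_option maxHeartbeats 2000000 in
lemma entry_aux (a : ℝ)
    (Λ : Matrix (Fin 2) (Fin 2) ℂ →ₗ[ℂ] Matrix (Fin 2 × Fin 2) (Fin 2 × Fin 2) ℂ)
    (key : ∀ X : Matrix (Fin 2) (Fin 2) ℂ, Λ X =
      ((X 0 0 + X 1 1)/2) • ((1/2 : ℂ) •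
        ((1 : Matrix (Fin 2 × Fin 2) (Fin 2 × Fin 2) ℂ) + (a : ℂ) • ∑ i, pauli i ⊗ₖ pauli i))
      + ((X 0 1 + X 1 0)/2) • ((1/2 : ℂ) • (pauli 0 ⊗ₖ (1 : Matrix (Fin 2) (Fin 2) ℂ)))
      + (Complex.I * (X 0 1 - X 1 0)/2) • ((1/2 : ℂ) • (pauli 1 ⊗ₖ (1 : Matrix (Fin 2) (Fin 2) ℂ)))
      + ((X 0 0 - X 1 1)/2) • ((1/2 : ℂ) • (pauli 2 ⊗ₖ (1 : Matrix (Fin 2) (Fin 2) ℂ)))) :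
    (Λ !![1, 0; 0, 0]) (1, 0) (1, 0) = (-a/4 : ℂ) ∧
    (Λ !![1, 0; 0, 0]) (1, 1) (1, 1) = (a/4 : ℂ) := by
  rw [key]
  constructor <;>
    (simp [pauli, Matrix.add_apply, Matrix.smul_apply, Matrix.kroneckerMap_apply,
      Matrix.one_apply, Fin.sum_univ_three, Matrix.sum_apply, smul_eq_mul, Prod.ext_iff]
     ring)

/-- the assignment map `Λ_S` with `Λ_S(σ^(i)) = (1/2) σ^(i) ⊗ I_E` and
`Λ_S(I_S) = (1/2)(I_SE + a Σ_i σ^(i) ⊗ σ^(i))`, `a ≠ 0`, is trace-preserving and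
Hermiticity-preserving but not positive. -/
theorem assignment_map_pauli_not_positive
    (a : ℝ) (ha : a ≠ 0)
    (Λ : Matrix (Fin 2) (Fin 2) ℂ →ₗ[ℂ] Matrix (Fin 2 × Fin 2) (Fin 2 × Fin 2) ℂ)
    (hΛσ : ∀ i : Fin 3, Λ (pauli i) = (1/2 : ℂ) • (pauli i ⊗ₖ (1 : Matrix (Fin 2) (Fin 2) ℂ)))
    (hΛI : Λ 1 = (1/2 : ℂ) •
      ((1 : Matrix (Fin 2 × Fin 2) (Fin 2 × Fin 2) ℂ) + (a : ℂ) • ∑ i, pauli i ⊗ₖ pauli i)) :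
    (∀ X, (Λ X).trace = X.trace) ∧
    (∀ X, Λ Xᴴ = (Λ X)ᴴ) ∧
    ¬ (∀ X : Matrix (Fin 2) (Fin 2) ℂ, X.PosSemidef → (Λ X).PosSemidef) := by
  
  have key : ∀ X : Matrix (Fin 2) (Fin 2) ℂ, Λ X =
      ((X 0 0 + X 1 1)/2) • ((1/2 : ℂ) •
        ((1 : Matrix (Fin 2 × Fin 2) (Fin 2 × Fin 2) ℂ) + (a : ℂ) • ∑ i, pauli i ⊗ₖ pauli i))
      + ((X 0 1 + X 1 0)/2) • ((1/2 : ℂ) • (pauli 0 ⊗ₖ (1 : Matrix (Fin 2) (Fin 2) ℂ)))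
      + (Complex.I * (X 0 1 - X 1 0)/2) • ((1/2 : ℂ) • (pauli 1 ⊗ₖ (1 : Matrix (Fin 2) (Fin 2) ℂ)))
      + ((X 0 0 - X 1 1)/2) • ((1/2 : ℂ) • (pauli 2 ⊗ₖ (1 : Matrix (Fin 2) (Fin 2) ℂ))) := by
    intro X
    conv_lhs => rw [pauli_decomp X]
    simp only [map_add, map_smul, hΛσ, hΛI]
  refine ⟨?_, ?_, ?_⟩
  · intro X
    rw [key X]
    rw [Matrix.trace_fin_two X]
    simp only [Matrix.trace_add, Matrix.trace_smul, Matrix.trace_sum,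
      Fin.sum_univ_three, trace_pauli_kron_one, trace_pauli_kron_pauli,
      Matrix.trace_one, smul_eq_mul]
    simp
    ring
  · intro X
    exact herm_aux a Λ X key
  · intro hpos
    set X : Matrix (Fin 2) (Fin 2) ℂ := !![1, 0; 0, 0] with hX
    have hXpsd : X.PosSemidef := by
      have hXeq : X = Xᴴ * X := by
        ext i j
        fin_cases i <;> fin_cases j <;>
          simp [hX, Matrix.mul_apply, Fin.sum_univ_two]
      rw [hXeq]
      exact Matrix.posSemidef_conjTranspose_mul_self X
    have h := hpos X hXpsd
    have ea := entry_aux a Λ key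
    have e1 : (Λ X) (1, 0) (1, 0) = (-a/4 : ℂ) := by rw [hX]; exact ea.1
    have e2 : (Λ X) (1, 1) (1, 1) = (a/4 : ℂ) := by rw [hX]; exact ea.2
    have h1 := psd_diag_nonneg h (1, 0)
    have h2 := psd_diag_nonneg h (1, 1)
    rw [e1] at h1
    rw [e2] at h2
    rw [Complex.le_def] at h1 h2
    have r1 : (0:ℝ) ≤ -a/4 := by simpa using h1.1
    have r2 : (0:ℝ) ≤ a/4 := by simpa using h2.1
    apply ha
    linarith
end

section
/- For a real number a and Bloch vector α⃗ ∈ R^3, the 4×4 matrix τ = (1/4)(I ⊗ I + Σ_{i=1}^3 α^{(i)} σ^{(i)} ⊗ I + a Σ_{i=1}^3 σ^{(i)} ⊗ σ^{(i)}) is positive semidefinite if and only if: when a ≥ 0, |α⃗| ≤ √((1+a)(1−3a)) (requiring a ≤ 1/3), and when a ≤ 0, |α⃗| ≤ 1 + a. -/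
set_option maxHeartbeats 4000000


open scoped Kronecker ComplexOrder Matrix

private lemma block_nonneg' (a p q u1 u2 v1 v2 : ℝ) (hp : 0 ≤ p) (hq : 0 ≤ q)
    (hpq : 4*a^2 ≤ p*q) :
    0 ≤ p*(u1^2+u2^2) + q*(v1^2+v2^2) + 4*a*(u1*v1+u2*v2) := by
  rcases eq_or_lt_of_le hp with h0 | h0
  · have ha : a = 0 := by nlinarith
    subst ha
    rw [← h0]
    nlinarith [sq_nonneg v1, sq_nonneg v2]
  · nlinarith [sq_nonneg (p*u1 + 2*a*v1), sq_nonneg (p*u2 + 2*a*v2),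
      mul_nonneg (sub_nonneg.mpr hpq) (add_nonneg (sq_nonneg v1) (sq_nonneg v2))]

private lemma det_rec' (a p q : ℝ) (hp : 0 ≤ p) (hq : 0 ≤ q)
    (h1 : 0 ≤ p*(p*q - 4*a^2)) (h2 : 0 ≤ q*(p*q - 4*a^2))
    (h3 : 0 ≤ p + q - 4*a) (h4 : 0 ≤ p + q + 4*a) :
    4*a^2 ≤ p*q := by
  rcases eq_or_lt_of_le hp with h0 | h0
  · rcases eq_or_lt_of_le hq with g0 | g0
    · nlinarith
    · nlinarith
  · nlinarith

private lemma cond_iff' (a s r2 : ℝ) (hs2 : s^2 = r2) :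
    (-s ≤ 1+a ∧ s ≤ 1+a ∧ 0 ≤ 1+s-a ∧ 0 ≤ 1-s-a ∧ 4*a^2 ≤ (1+s-a)*(1-s-a)) ↔
      ((0 ≤ a → a ≤ 1/3 ∧
          Real.sqrt r2 ≤ Real.sqrt ((1 + a) * (1 - 3 * a))) ∧
        (a ≤ 0 → Real.sqrt r2 ≤ 1 + a)) := by
  have habs : Real.sqrt r2 = |s| := by rw [← hs2]; exact Real.sqrt_sq_eq_abs s
  constructor
  · rintro ⟨c1, c2, c3, c4, c5⟩
    constructor
    · intro ha
      have hkey : s^2 ≤ (1+a)*(1-3*a) := by nlinarith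
      have h13 : a ≤ 1/3 := by nlinarith [sq_nonneg s]
      exact ⟨h13, by rw [habs, ← Real.sqrt_sq_eq_abs]; exact Real.sqrt_le_sqrt (by nlinarith)⟩
    · intro ha
      rw [habs, abs_le]
      constructor <;> linarith
  · intro ⟨h1, h2⟩
    rcases le_total 0 a with ha | ha
    · obtain ⟨h13, hle⟩ := h1 ha
      have hP : 0 ≤ (1+a)*(1-3*a) := by nlinarith
      have hkey : s^2 ≤ (1+a)*(1-3*a) := by
        have h' : |s| ≤ Real.sqrt ((1+a)*(1-3*a)) := by rw [← habs]; exact hle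
        nlinarith [Real.sq_sqrt hP, abs_nonneg s, Real.sqrt_nonneg ((1+a)*(1-3*a)),
          sq_abs s, mul_self_le_mul_self (abs_nonneg s) h']
      have h1a : (0:ℝ) ≤ 1 + a := by linarith
      have hs1a : |s| ≤ 1 + a := by
        have hsq : s^2 ≤ (1+a)^2 := by nlinarith
        nlinarith [sq_abs s, abs_nonneg s]
      obtain ⟨hl, hr⟩ := abs_le.mp hs1a
      refine ⟨by linarith, by linarith, by nlinarith, by nlinarith, by nlinarith⟩
    · have hle := h2 ha
      have hs1a : |s| ≤ 1 + a := by rw [← habs]; exact hle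
      obtain ⟨hl, hr⟩ := abs_le.mp hs1a
      have h1a : 0 ≤ 1 + a := le_trans (abs_nonneg s) hs1a
      refine ⟨by linarith, by linarith, by nlinarith, by nlinarith, by nlinarith [sq_abs s]⟩

private lemma suff_real' (a s w1 w2 u1 u2 v1 v2 z1 z2 : ℝ)
    (c1 : -s ≤ 1+a) (c2 : s ≤ 1+a) (c3 : 0 ≤ 1+s-a) (c4 : 0 ≤ 1-s-a)
    (c5 : 4*a^2 ≤ (1+s-a)*(1-s-a)) :
    0 ≤ (1+s+a)*(w1^2+w2^2) + (1+s-a)*(u1^2+u2^2) + (1-s-a)*(v1^2+v2^2)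
      + (1-s+a)*(z1^2+z2^2) + 4*a*(u1*v1+u2*v2) := by
  have hb := block_nonneg' a (1+s-a) (1-s-a) u1 u2 v1 v2 c3 c4 c5
  have h1 : (0:ℝ) ≤ 1+s+a := by linarith
  have h2 : (0:ℝ) ≤ 1-s+a := by linarith
  nlinarith [mul_nonneg h1 (add_nonneg (sq_nonneg w1) (sq_nonneg w2)),
    mul_nonneg h2 (add_nonneg (sq_nonneg z1) (sq_nonneg z2))]

private lemma kronCT' (A B : Matrix (Fin 2) (Fin 2) ℂ) : (A ⊗ₖ B)ᴴ = Aᴴ ⊗ₖ Bᴴ := by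
  ext ⟨i,j⟩ ⟨k,l⟩
  simp [Matrix.conjTranspose_apply, mul_comm]

private lemma quadForm' (a : ℝ) (c : Fin 2 → ℂ) (x : Fin 2 × Fin 2 → ℂ) :
    star x ⬝ᵥ (((1/4 : ℂ) • ((1 : Matrix (Fin 2 × Fin 2) (Fin 2 × Fin 2) ℂ) +
        (Matrix.diagonal c) ⊗ₖ (1 : Matrix (Fin 2) (Fin 2) ℂ) +
        (a : ℂ) • ∑ i, pauli i ⊗ₖ pauli i)) *ᵥ x) =
      (1/4 : ℂ) * ((1 + c 0 + a) * ((starRingEnd ℂ) (x (0,0)) * x (0,0))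
        + (1 + c 0 - a) * ((starRingEnd ℂ) (x (0,1)) * x (0,1))
        + (1 + c 1 - a) * ((starRingEnd ℂ) (x (1,0)) * x (1,0))
        + (1 + c 1 + a) * ((starRingEnd ℂ) (x (1,1)) * x (1,1))
        + 2 * a * ((starRingEnd ℂ) (x (0,1)) * x (1,0) + (starRingEnd ℂ) (x (1,0)) * x (0,1))) := by
  simp [dotProduct, Matrix.mulVec, Fintype.sum_prod_type, Fin.sum_univ_two,
    Fin.sum_univ_three, Matrix.sum_apply, pauli, Matrix.one_apply, Matrix.diagonal,
    Prod.ext_iff, Prod.fst_one, Prod.snd_one, Pi.star_apply]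
  ring

/-- positivity criterion for
`τ = (1/4)(I⊗I + Σ_i α_i σ^(i)⊗I + a Σ_i σ^(i)⊗σ^(i))`. -/
theorem tau_posSemidef_iff
    (a : ℝ) (α : Fin 3 → ℝ) :
    ((1/4 : ℂ) • ((1 : Matrix (Fin 2 × Fin 2) (Fin 2 × Fin 2) ℂ) +
        ∑ i, (α i : ℂ) • (pauli i ⊗ₖ (1 : Matrix (Fin 2) (Fin 2) ℂ)) +
        (a : ℂ) • ∑ i, pauli i ⊗ₖ pauli i)).PosSemidef ↔
      ((0 ≤ a → a ≤ 1/3 ∧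
          Real.sqrt (∑ i, α i ^ 2) ≤ Real.sqrt ((1 + a) * (1 - 3 * a))) ∧
        (a ≤ 0 → Real.sqrt (∑ i, α i ^ 2) ≤ 1 + a)) := by
  set r2 : ℝ := ∑ i, α i ^ 2 with hr2def
  set A : Matrix (Fin 2) (Fin 2) ℂ := ∑ i, (α i : ℂ) • pauli i with hAdef
  have hA : A.IsHermitian := by
    have h : Aᴴ = A := by
      ext i j
      fin_cases i <;> fin_cases j <;>
        simp [hAdef, Matrix.conjTranspose_apply, Matrix.sum_apply, Fin.sum_univ_three, pauli]
    exact h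
  set U : Matrix (Fin 2) (Fin 2) ℂ := (hA.eigenvectorUnitary : Matrix (Fin 2) (Fin 2) ℂ) with hUdef
  have hU1 : Uᴴ * U = 1 := by
    rw [← Matrix.star_eq_conjTranspose]
    exact (Unitary.mem_iff.mp hA.eigenvectorUnitary.2).1
  have hU2 : U * Uᴴ = 1 := by
    rw [← Matrix.star_eq_conjTranspose]
    exact (Unitary.mem_iff.mp hA.eigenvectorUnitary.2).2
  set D : Matrix (Fin 2) (Fin 2) ℂ := Matrix.diagonal (fun i => (hA.eigenvalues i : ℂ)) with hDdef
  have hspec : A = U * D * Uᴴ := by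
    have := hA.spectral_theorem
    rw [Unitary.conjStarAlgAut_apply] at this
    rw [← Matrix.star_eq_conjTranspose]
    exact this
  have hUAU : Uᴴ * A * U = D := by
    rw [hspec]
    calc Uᴴ * (U * D * Uᴴ) * U = (Uᴴ * U) * D * (Uᴴ * U) := by noncomm_ring
    _ = D := by rw [hU1]; simp
  set s : ℝ := hA.eigenvalues 0 with hsdef
  have htr : s + hA.eigenvalues 1 = 0 := by
    have h1 : A.trace = 0 := by
      simp [hAdef, Matrix.trace, Matrix.sum_apply, Fin.sum_univ_three, Fin.sum_univ_two,
        Matrix.diag, pauli]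
    have h2 : A.trace = (s : ℂ) + (hA.eigenvalues 1 : ℂ) := by
      calc A.trace = (U * D * Uᴴ).trace := by rw [← hspec]
      _ = (Uᴴ * U * D).trace := by rw [Matrix.trace_mul_cycle]
      _ = D.trace := by rw [hU1, one_mul]
      _ = _ := by simp [hDdef, Matrix.trace_diagonal, Fin.sum_univ_two, hsdef]
    rw [h1] at h2
    exact_mod_cast h2.symm
  have ht : hA.eigenvalues 1 = -s := by linarith
  have hdet : s * hA.eigenvalues 1 = -r2 := by
    have h1 : A.det = (-r2 : ℝ) := by
      rw [Matrix.det_fin_two]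
      simp [hAdef, Matrix.sum_apply, Fin.sum_univ_three, pauli, hr2def, Complex.I_sq]
      push_cast
      ring_nf
      simp [Complex.I_sq]
      ring
    have h2 := hA.det_eq_prod_eigenvalues
    rw [h1] at h2
    simp [Fin.prod_univ_two] at h2
    exact_mod_cast h2.symm
  have hs2 : s^2 = r2 := by rw [ht] at hdet; nlinarith
  -- the matrices
  set P : Matrix (Fin 2 × Fin 2) (Fin 2 × Fin 2) ℂ := ∑ i, pauli i ⊗ₖ pauli i with hPdef
  set T : Matrix (Fin 2 × Fin 2) (Fin 2 × Fin 2) ℂ :=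
    (1/4 : ℂ) • ((1 : Matrix (Fin 2 × Fin 2) (Fin 2 × Fin 2) ℂ) +
        ∑ i, (α i : ℂ) • (pauli i ⊗ₖ (1 : Matrix (Fin 2) (Fin 2) ℂ)) +
        (a : ℂ) • P) with hTdef
  set M : Matrix (Fin 2 × Fin 2) (Fin 2 × Fin 2) ℂ :=
    (1/4 : ℂ) • ((1 : Matrix (Fin 2 × Fin 2) (Fin 2 × Fin 2) ℂ) +
        D ⊗ₖ (1 : Matrix (Fin 2) (Fin 2) ℂ) + (a : ℂ) • P) with hMdef
  set V : Matrix (Fin 2 × Fin 2) (Fin 2 × Fin 2) ℂ := U ⊗ₖ U with hVdef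
  have hAK : (∑ i, (α i : ℂ) • (pauli i ⊗ₖ (1 : Matrix (Fin 2) (Fin 2) ℂ)))
      = A ⊗ₖ (1 : Matrix (Fin 2) (Fin 2) ℂ) := by
    ext ⟨i,j⟩ ⟨k,l⟩
    simp [hAdef, Matrix.sum_apply, Finset.sum_mul]
    exact Finset.sum_congr rfl (fun _ _ => by ring)
  have hcomm : P * V = V * P := by
    ext ⟨i,j⟩ ⟨k,l⟩
    fin_cases i <;> fin_cases j <;> fin_cases k <;> fin_cases l <;>
      simp [hPdef, hVdef, Matrix.mul_apply, Fintype.sum_prod_type, Fin.sum_univ_two,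
        Fin.sum_univ_three, Matrix.sum_apply, pauli] <;> ring
  have hV1 : Vᴴ * V = 1 := by
    rw [hVdef, kronCT', ← Matrix.mul_kronecker_mul, hU1, Matrix.one_kronecker_one]
  have hV2 : V * Vᴴ = 1 := by
    rw [hVdef, kronCT', ← Matrix.mul_kronecker_mul, hU2, Matrix.one_kronecker_one]
  have hMT : Vᴴ * T * V = M := by
    have hAD : Vᴴ * (A ⊗ₖ (1 : Matrix (Fin 2) (Fin 2) ℂ)) * V
        = D ⊗ₖ (1 : Matrix (Fin 2) (Fin 2) ℂ) := by
      rw [hVdef, kronCT', ← Matrix.mul_kronecker_mul, ← Matrix.mul_kronecker_mul, hUAU]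
      congr 1
      rw [mul_one, hU1]
    rw [hTdef, hMdef, hAK, Matrix.mul_smul, Matrix.smul_mul]
    congr 1
    rw [Matrix.mul_add, Matrix.mul_add, Matrix.add_mul, Matrix.add_mul, mul_one]
    congr 1
    · rw [hV1, hAD]
    · rw [Matrix.mul_smul, Matrix.smul_mul, mul_assoc, hcomm, ← mul_assoc, hV1, one_mul]
  have hTherm : T.IsHermitian := by
    have hpau : ∀ i, (pauli i)ᴴ = pauli i := by
      intro i; fin_cases i <;> ext j k <;> fin_cases j <;> fin_cases k <;> simp [pauli]
    show Tᴴ = T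
    ext ⟨i,j⟩ ⟨k,l⟩
    fin_cases i <;> fin_cases j <;> fin_cases k <;> fin_cases l <;>
      simp [hTdef, hPdef, Matrix.conjTranspose_apply, Matrix.sum_apply, Fin.sum_univ_three,
        pauli, Matrix.one_apply]
    all_goals try simp [Prod.ext_iff, Prod.fst_one, Prod.snd_one]
    all_goals try ring
  have hiff : T.PosSemidef ↔ M.PosSemidef := by
    constructor
    · intro h
      rw [← hMT]
      exact h.conjTranspose_mul_mul_same V
    · intro h
      have hTe : T = V * M * Vᴴ := by
        rw [← hMT]
        calc T = (V * Vᴴ) * T * (V * Vᴴ) := by rw [hV2]; simp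
        _ = V * (Vᴴ * T * V) * Vᴴ := by noncomm_ring
      rw [hTe]
      exact h.mul_mul_conjTranspose_same V
  have hq : ∀ x : Fin 2 × Fin 2 → ℂ, star x ⬝ᵥ (M *ᵥ x) =
      (1/4 : ℂ) * ((1 + (s:ℂ) + a) * ((starRingEnd ℂ) (x (0,0)) * x (0,0))
        + (1 + (s:ℂ) - a) * ((starRingEnd ℂ) (x (0,1)) * x (0,1))
        + (1 - (s:ℂ) - a) * ((starRingEnd ℂ) (x (1,0)) * x (1,0))
        + (1 - (s:ℂ) + a) * ((starRingEnd ℂ) (x (1,1)) * x (1,1))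
        + 2 * a * ((starRingEnd ℂ) (x (0,1)) * x (1,0) + (starRingEnd ℂ) (x (1,0)) * x (0,1))) := by
    intro x
    have := quadForm' a (fun i => (hA.eigenvalues i : ℂ)) x
    rw [hMdef, hDdef, hPdef]
    convert this using 2 <;> rw [ht] <;> push_cast <;> ring
  -- the real-valued test vector evaluation
  have hreal : ∀ w u v z : ℝ, M.PosSemidef →
      0 ≤ (1+s+a)*w^2 + (1+s-a)*u^2 + (1-s-a)*v^2 + (1-s+a)*z^2 + 4*a*(u*v) := by
    intro w u v z h
    have h2 := h.dotProduct_mulVec_nonneg (fun p : Fin 2 × Fin 2 => (![![w, u], ![v, z]] p.1 p.2 : ℂ))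
    rw [hq] at h2
    have h3 : (0:ℂ) ≤ (((1/4) * ((1+s+a)*w^2 + (1+s-a)*u^2 + (1-s-a)*v^2
        + (1-s+a)*z^2 + 4*a*(u*v)) : ℝ) : ℂ) := by
      refine le_of_le_of_eq h2 ?_
      dsimp only
      simp only [Matrix.cons_val', Matrix.cons_val_zero, Matrix.cons_val_one, Matrix.head_cons,
        Matrix.empty_val', Matrix.cons_val_fin_one, Matrix.head_fin_const]
      push_cast [Complex.conj_ofReal]
      ring
    rw [Complex.zero_le_real] at h3
    linarith
  rw [hiff]
  rw [← cond_iff' a s r2 hs2]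
  constructor
  · intro h
    have k1 := hreal 1 0 0 0 h
    have k2 := hreal 0 1 0 0 h
    have k3 := hreal 0 0 1 0 h
    have k4 := hreal 0 0 0 1 h
    have c3 : (0:ℝ) ≤ 1+s-a := by linarith
    have c4 : (0:ℝ) ≤ 1-s-a := by linarith
    refine ⟨by linarith, by linarith, c3, c4, ?_⟩
    have h1 := hreal 0 (-2*a) (1+s-a) 0 h
    have h2 := hreal 0 (1-s-a) (-2*a) 0 h
    have h3 := hreal 0 1 (-1) 0 h
    have h4 := hreal 0 1 1 0 h
    refine det_rec' a (1+s-a) (1-s-a) c3 c4 (by nlinarith) (by nlinarith) (by nlinarith) (by nlinarith)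
  · rintro ⟨c1, c2, c3, c4, c5⟩
    refine Matrix.PosSemidef.of_dotProduct_mulVec_nonneg ?_ ?_
    · have : M.IsHermitian := by
        rw [← hMT]
        exact Matrix.isHermitian_conjTranspose_mul_mul V hTherm
      exact this
    · intro x
      rw [hq]
      have h14 : (0:ℂ) ≤ 1/4 := by
        rw [(by norm_num : (1/4:ℂ) = ((1/4:ℝ):ℂ)), Complex.zero_le_real]
        norm_num
      refine mul_nonneg h14 ?_
      have hsuff := suff_real' a s (x (0,0)).re (x (0,0)).im (x (0,1)).re (x (0,1)).im
        (x (1,0)).re (x (1,0)).im (x (1,1)).re (x (1,1)).im c1 c2 c3 c4 c5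
      rw [Complex.le_def]
      constructor
      · simp only [Complex.mul_re, Complex.mul_im, Complex.add_re, Complex.add_im,
          Complex.sub_re, Complex.sub_im, Complex.one_re, Complex.one_im,
          Complex.ofReal_re, Complex.ofReal_im, Complex.conj_re, Complex.conj_im,
          Complex.zero_re, Complex.re_ofNat, Complex.im_ofNat]
        nlinarith [hsuff]
      · simp only [Complex.mul_re, Complex.mul_im, Complex.add_re, Complex.add_im,
          Complex.sub_re, Complex.sub_im, Complex.one_re, Complex.one_im,
          Complex.ofReal_re, Complex.ofReal_im, Complex.conj_re, Complex.conj_im,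
          Complex.zero_im, Complex.re_ofNat, Complex.im_ofNat]
        ring
end
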